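/- arXiv:2308.12399 — 8 statements merged into one kernel-verified Lean document; each statement's English description precedes it below -/
import Mathlib

section
/- For any simple graphs G and H that allow loops, the SNT-rank of their disjoint union satisfies st_+(G ∪ H) = st_+(G) + st_+(H). In particular, st_+(G ∪ K_1) = st_+(G), where K_1 is a single vertex with no loop. -/
open Matrix

/-- A finite simple undirected graph that allows loops: a symmetric adjacency
relation on the vertex type. -/
structure LGraph (V : Type*) where
  /-- the adjacency relation; `Adj v v` means a loop at `v`. -/
  Adj : V → V → Prop
  /-- adjacency is symmetric -/
  symm : ∀ {u v : V}, Adj u v → Adj v u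

namespace LGraph

variable {V W : Type*}

/-- `𝒞` is a set-join cover of `G`: all components are nonempty subsets of the
vertex set, and the union of the edge sets of the set-joins `K ∨ L` in `𝒞` is
exactly the edge set of `G`. A set-join is represented as an unordered pair
`s(K, L)` of subsets of the vertex set. -/
def IsSetJoinCover (G : LGraph V) (𝒞 : Set (Sym2 (Set V))) : Prop :=
  (∀ p ∈ 𝒞, ∀ K ∈ p, (K : Set V).Nonempty) ∧
    ∀ u v : V, G.Adj u v ↔ ∃ p ∈ 𝒞, ∃ K L : Set V, p = s(K, L) ∧ u ∈ K ∧ v ∈ L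

/-- The component set `V(𝒞)` of a set-join cover: all subsets of the vertex set
appearing as a component of some set-join in `𝒞`. -/
def comps (𝒞 : Set (Sym2 (Set V))) : Set (Set V) :=
  {K : Set V | ∃ p ∈ 𝒞, K ∈ p}

/-- The order `|𝒞|` of a set-join cover: the number of its components. -/
noncomputable def coverOrder (𝒞 : Set (Sym2 (Set V))) : ℕ :=
  (comps 𝒞).ncard

/-- The SNT-rank `st₊(G)` of a graph: the minimal order of a set-join cover of `G`. -/
noncomputable def st (G : LGraph V) : ℕ :=
  sInf {k : ℕ | ∃ 𝒞 : Set (Sym2 (Set V)), G.IsSetJoinCover 𝒞 ∧ coverOrder 𝒞 = k}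

/-- An optimal set-join cover (OSJ cover): a set-join cover of order `st₊(G)`. -/
def IsOptimalCover (G : LGraph V) (𝒞 : Set (Sym2 (Set V))) : Prop :=
  G.IsSetJoinCover 𝒞 ∧ coverOrder 𝒞 = G.st

/-- The graph `G(𝒞)` of a set-join cover: vertices are the components, and two
components `K`, `L` are adjacent iff the set-join `K ∨ L` belongs to `𝒞`. -/
def coverGraph (𝒞 : Set (Sym2 (Set V))) : LGraph (comps 𝒞) where
  Adj K L := s((K : Set V), (L : Set V)) ∈ 𝒞
  symm := by
    intro K L h
    rwa [Sym2.eq_swap] at h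

/-- The neighbourhood of a vertex (`v ∈ neighborSet v` iff `v` has a loop). -/
def neighborSet (G : LGraph V) (v : V) : Set V := {w | G.Adj v w}

/-- The induced subgraph on a set of vertices. -/
def induce (G : LGraph V) (S : Set V) : LGraph S where
  Adj a b := G.Adj (a : V) (b : V)
  symm := by intro a b h; exact G.symm h

/-- Adjacency for the disjoint union of two graphs. -/
def disjUnionAdj (G : LGraph V) (H : LGraph W) : V ⊕ W → V ⊕ W → Prop
  | Sum.inl a, Sum.inl b => G.Adj a b
  | Sum.inr a, Sum.inr b => H.Adj a b
  | _, _ => False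

/-- The disjoint union `G ∪ H` of two graphs. -/
def disjUnion (G : LGraph V) (H : LGraph W) : LGraph (V ⊕ W) where
  Adj := disjUnionAdj G H
  symm := by
    rintro (a | a) (b | b) h
    · exact G.symm h
    · exact h.elim
    · exact h.elim
    · exact H.symm h

/-- The graph with no edges on vertex type `V`. -/
def emptyGraph (V : Type*) : LGraph V where
  Adj _ _ := False
  symm := by intro u v h; exact h

/-- Adjacency for the join of a graph with a single looped vertex `none`. -/
def joinK1ℓAdj (G : LGraph V) : Option V → Option V → Prop
  | some a, some b => G.Adj a b
  | _, _ => True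

/-- The join `G ∨ K₁ˡ` of `G` with a single looped vertex (the vertex `none`). -/
def joinK1ℓ (G : LGraph V) : LGraph (Option V) where
  Adj := joinK1ℓAdj G
  symm := by
    rintro (_ | a) (_ | b) h
    · trivial
    · trivial
    · trivial
    · exact G.symm h

/-- The complete loopless graph `Kₙ` on `Fin n`. -/
def completeGraph (n : ℕ) : LGraph (Fin n) where
  Adj i j := i ≠ j
  symm := by intro i j h; exact h.symm

/-- The path `Pₙ` on `n` vertices (no loops). -/
def pathGraph (n : ℕ) : LGraph (Fin n) where
  Adj i j := (i : ℕ) + 1 = (j : ℕ) ∨ (j : ℕ) + 1 = (i : ℕ)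
  symm := by intro i j h; exact h.symm

/-- The cycle `Cₙ` on `n` vertices (no loops), for `n ≥ 3`. -/
def cycleGraph (n : ℕ) : LGraph (Fin n) where
  Adj i j := ((i : ℕ) + 1) % n = (j : ℕ) ∨ ((j : ℕ) + 1) % n = (i : ℕ)
  symm := by intro i j h; exact h.symm

/-- Adjacency for the generalised star: the centre is `none`, and `some ⟨i, j⟩`
is the vertex at distance `j + 1` from the centre on arm `i`. -/
def genStarAdj (t : ℕ) (k : Fin t → ℕ) :
    Option ((i : Fin t) × Fin (k i)) → Option ((i : Fin t) × Fin (k i)) → Prop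
  | none, none => False
  | none, some ⟨_, j⟩ => (j : ℕ) = 0
  | some ⟨_, j⟩, none => (j : ℕ) = 0
  | some ⟨i, j⟩, some ⟨i', j'⟩ => i = i' ∧ ((j : ℕ) + 1 = (j' : ℕ) ∨ (j' : ℕ) + 1 = (j : ℕ))

/-- The generalised star `star(k₁, …, k_t)` with central vertex `none` and `t`
arms, the `i`-th arm being a path with `k i` edges emanating from the centre. -/
def genStar (t : ℕ) (k : Fin t → ℕ) : LGraph (Option ((i : Fin t) × Fin (k i))) where
  Adj := genStarAdj t k
  symm := by
    rintro (_ | ⟨i, j⟩) (_ | ⟨i', j'⟩) h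
    · exact h.elim
    · exact h
    · exact h
    · exact ⟨h.1.symm, h.2.symm⟩

/-- A loopless leaf: a vertex with exactly one neighbour and no loop. -/
def LooplessLeaf (G : LGraph V) (v : V) : Prop :=
  ¬ G.Adj v v ∧ ∃ w : V, G.neighborSet v = {w}

/-- Delete from `G` all edges incident to the vertex `w`. -/
def deleteVertexEdges (G : LGraph V) (w : V) : LGraph V where
  Adj u v := G.Adj u v ∧ u ≠ w ∧ v ≠ w
  symm := by intro u v h; exact ⟨G.symm h.1, h.2.2, h.2.1⟩

/-- A graph is twin-free if no two distinct vertices have the same neighbourhood. -/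
def TwinFree (G : LGraph V) : Prop :=
  ∀ u v : V, G.neighborSet u = G.neighborSet v → u = v

/-- `G` has a unique optimal set-join cover. -/
def HasUniqueOptimalCover (G : LGraph V) : Prop :=
  ∃! 𝒞 : Set (Sym2 (Set V)), G.IsSetJoinCover 𝒞 ∧ coverOrder 𝒞 = G.st

/-- The cover graphs of two set-join covers are isomorphic. -/
def CoverGraphIso (𝒞 : Set (Sym2 (Set V))) (𝒟 : Set (Sym2 (Set W))) : Prop :=
  ∃ e : comps 𝒞 ≃ comps 𝒟,
    ∀ K L : comps 𝒞, (coverGraph 𝒞).Adj K L ↔ (coverGraph 𝒟).Adj (e K) (e L)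

/-- All optimal set-join covers of `G` have isomorphic cover graphs. -/
def HasUniqueOSJCoverGraph (G : LGraph V) : Prop :=
  ∀ 𝒞 𝒟 : Set (Sym2 (Set V)),
    G.IsOptimalCover 𝒞 → G.IsOptimalCover 𝒟 → CoverGraphIso 𝒞 𝒟

/-- Entrywise nonnegativity of a real matrix. -/
def EntrywiseNonneg {m n : Type*} (A : Matrix m n ℝ) : Prop :=
  ∀ i j, 0 ≤ A i j

/-- The SNT-rank `st₊(A)` of a matrix: the minimal `k` such that `A = B * C * Bᵀ`
with `B` an entrywise nonnegative `n × k` matrix and `C` a symmetric entrywise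
nonnegative `k × k` matrix. -/
noncomputable def stM {V : Type*} [Fintype V] (A : Matrix V V ℝ) : ℕ :=
  sInf {k : ℕ | ∃ B : Matrix V (Fin k) ℝ, ∃ C : Matrix (Fin k) (Fin k) ℝ,
    EntrywiseNonneg B ∧ C.IsSymm ∧ EntrywiseNonneg C ∧ A = B * C * Bᵀ}

/-- The SNT-rank `st₊(G)` of a graph defined via matrices: the minimum of
`st₊(A)` over all symmetric entrywise nonnegative matrices `A` whose pattern
graph is `G`. -/
noncomputable def stMGraph {V : Type*} [Fintype V] (G : LGraph V) : ℕ :=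
  sInf {k : ℕ | ∃ A : Matrix V V ℝ, A.IsSymm ∧ EntrywiseNonneg A ∧
    (∀ i j, G.Adj i j ↔ 0 < A i j) ∧ stM A = k}

/-- The loopy graph associated with a simple graph. -/
def _root_.SimpleGraph.toLGraph (G : SimpleGraph V) : LGraph V where
  Adj := G.Adj
  symm := by intro u v h; exact G.adj_symm h

/-- The edge star cover number `starc(G)` of a loopless simple graph: the minimal
number of stars (given by a centre and a nonempty set of leaves not containing
the centre) whose edge sets have union exactly `E(G)`. -/
noncomputable def starCoverNumber (G : SimpleGraph V) : ℕ :=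
  sInf {k : ℕ | ∃ f : Fin k → V × Set V,
    (∀ i, (f i).2.Nonempty ∧ (f i).1 ∉ (f i).2) ∧
    ∀ u v : V, G.Adj u v ↔
      ∃ i, (u = (f i).1 ∧ v ∈ (f i).2) ∨ (v = (f i).1 ∧ u ∈ (f i).2)}


section Aux

variable {V : Type*} [Fintype V]

/-- Any factorization indexed by a fintype gives a member of the `stM` set. -/
lemma mem_stM_set {ι : Type*} [Fintype ι]
    (A : Matrix V V ℝ) (B : Matrix V ι ℝ) (C : Matrix ι ι ℝ)
    (hB : EntrywiseNonneg B) (hCs : C.IsSymm) (hC : EntrywiseNonneg C)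
    (h : A = B * C * Bᵀ) :
    Fintype.card ι ∈ {k : ℕ | ∃ B' : Matrix V (Fin k) ℝ, ∃ C' : Matrix (Fin k) (Fin k) ℝ,
      EntrywiseNonneg B' ∧ C'.IsSymm ∧ EntrywiseNonneg C' ∧ A = B' * C' * B'ᵀ} := by
  classical
  set e := (Fintype.equivFin ι)
  refine ⟨B.submatrix id e.symm, C.submatrix e.symm e.symm,
    fun i j => hB _ _, hCs.submatrix _, fun i j => hC _ _, ?_⟩
  rw [Matrix.transpose_submatrix, Matrix.submatrix_mul_equiv, Matrix.submatrix_mul_equiv,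
    Matrix.submatrix_id_id]
  exact h

lemma stM_le_card {ι : Type*} [Fintype ι]
    (A : Matrix V V ℝ) (B : Matrix V ι ℝ) (C : Matrix ι ι ℝ)
    (hB : EntrywiseNonneg B) (hCs : C.IsSymm) (hC : EntrywiseNonneg C)
    (h : A = B * C * Bᵀ) : stM A ≤ Fintype.card ι :=
  Nat.sInf_le (mem_stM_set A B C hB hCs hC h)

/-- Every symmetric nonnegative matrix admits an optimal trifactorization. -/
lemma exists_stM_fact (A : Matrix V V ℝ) (hs : A.IsSymm) (hn : EntrywiseNonneg A) :
    ∃ B : Matrix V (Fin (stM A)) ℝ, ∃ C : Matrix (Fin (stM A)) (Fin (stM A)) ℝ,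
      EntrywiseNonneg B ∧ C.IsSymm ∧ EntrywiseNonneg C ∧ A = B * C * Bᵀ := by
  classical
  have h1 : EntrywiseNonneg (1 : Matrix V V ℝ) := by
    intro i j
    rw [Matrix.one_apply]
    split <;> norm_num
  have hmem := mem_stM_set A (1 : Matrix V V ℝ) A h1 hs hn
    (by rw [Matrix.transpose_one, Matrix.mul_one, Matrix.one_mul])
  exact Nat.sInf_mem ⟨Fintype.card V, hmem⟩

/-- Every graph has a matrix realizing its `stMGraph`. -/
lemma exists_stMGraph (G : LGraph V) :
    ∃ A : Matrix V V ℝ, A.IsSymm ∧ EntrywiseNonneg A ∧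
      (∀ i j, G.Adj i j ↔ 0 < A i j) ∧ stM A = stMGraph G := by
  classical
  have hne : {k : ℕ | ∃ A : Matrix V V ℝ, A.IsSymm ∧ EntrywiseNonneg A ∧
      (∀ i j, G.Adj i j ↔ 0 < A i j) ∧ stM A = k}.Nonempty := by
    refine ⟨_, Matrix.of (fun i j => if G.Adj i j then (1:ℝ) else 0), ?_, ?_, ?_, rfl⟩
    · ext i j
      simp only [Matrix.transpose_apply, Matrix.of_apply]
      have h : G.Adj j i ↔ G.Adj i j := ⟨G.symm, G.symm⟩
      rw [if_congr h rfl rfl]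
    · intro i j
      simp only [Matrix.of_apply]
      split <;> norm_num
    · intro i j
      simp only [Matrix.of_apply]
      by_cases h : G.Adj i j <;> simp [h]
  exact Nat.sInf_mem hne

lemma stMGraph_le (G : LGraph V) (A : Matrix V V ℝ) (hs : A.IsSymm)
    (hn : EntrywiseNonneg A) (hp : ∀ i j, G.Adj i j ↔ 0 < A i j) :
    stMGraph G ≤ stM A :=
  Nat.sInf_le ⟨A, hs, hn, hp, rfl⟩

/-- If all terms outside a set `s` of indices vanish, the factorization restricts. -/
lemma stM_submatrix_le {U n ι : Type*} [Fintype U] [Fintype n] [Fintype ι] [DecidableEq ι]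
    (A : Matrix n n ℝ) (B : Matrix n ι ℝ) (C : Matrix ι ι ℝ)
    (hB : EntrywiseNonneg B) (hCs : C.IsSymm) (hC : EntrywiseNonneg C)
    (hf : A = B * C * Bᵀ) (f : U → n) (s : Finset ι)
    (h0 : ∀ (u u' : U) (p q : ι), p ∉ s → B (f u) p * C p q * B (f u') q = 0)
    (h0' : ∀ (u u' : U) (p q : ι), q ∉ s → B (f u) p * C p q * B (f u') q = 0) :
    stM (A.submatrix f f) ≤ s.card := by
  classical
  have key : A.submatrix f f =
      (B.submatrix f (fun i : {x // x ∈ s} => (i : ι))) *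
        (C.submatrix (fun i : {x // x ∈ s} => (i : ι)) (fun i : {x // x ∈ s} => (i : ι))) *
        (B.submatrix f (fun i : {x // x ∈ s} => (i : ι)))ᵀ := by
    ext u u'
    rw [Matrix.submatrix_apply, hf]
    simp only [Matrix.mul_apply, Matrix.transpose_apply, Matrix.submatrix_apply,
      Finset.sum_mul]
    have hstep : ∀ j : ι, (∑ i : {x // x ∈ s}, B (f u) (i : ι) * C (i : ι) j * B (f u') j)
        = ∑ i ∈ s, B (f u) i * C i j * B (f u') j := fun j =>
      Finset.sum_coe_sort s (fun i => B (f u) i * C i j * B (f u') j)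
    calc ∑ j : ι, ∑ i : ι, B (f u) i * C i j * B (f u') j
        = ∑ j : ι, ∑ i ∈ s, B (f u) i * C i j * B (f u') j :=
          Finset.sum_congr rfl (fun j _ =>
            (Finset.sum_subset (Finset.subset_univ s)
              (fun i _ hi => h0 u u' i j hi)).symm)
      _ = ∑ j ∈ s, ∑ i ∈ s, B (f u) i * C i j * B (f u') j :=
          (Finset.sum_subset (Finset.subset_univ s)
            (fun j _ hj => Finset.sum_eq_zero fun i _ => h0' u u' i j hj)).symm
      _ = ∑ j : {x // x ∈ s}, ∑ i ∈ s, B (f u) i * C i (j : ι) * B (f u') (j : ι) :=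
          (Finset.sum_coe_sort s _).symm
      _ = ∑ j : {x // x ∈ s}, ∑ i : {x // x ∈ s},
            B (f u) (i : ι) * C (i : ι) (j : ι) * B (f u') (j : ι) :=
          Finset.sum_congr rfl (fun j _ => (hstep (j : ι)).symm)
  calc stM (A.submatrix f f) ≤ Fintype.card {x // x ∈ s} :=
        stM_le_card _ _ _ (fun i j => hB _ _) (hCs.submatrix _) (fun i j => hC _ _) key
    _ = s.card := Fintype.card_coe s

end Aux

/-- The main additivity result. -/
lemma stMGraph_disjUnion_eq {V W : Type*} [Fintype V] [Fintype W]
    (G : LGraph V) (H : LGraph W) :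
    stMGraph (disjUnion G H) = stMGraph G + stMGraph H := by
  classical
  apply le_antisymm
  · -- upper bound: block diagonal construction
    obtain ⟨A₁, hs₁, hn₁, hp₁, hst₁⟩ := exists_stMGraph G
    obtain ⟨A₂, hs₂, hn₂, hp₂, hst₂⟩ := exists_stMGraph H
    obtain ⟨B₁, C₁, hB₁, hCs₁, hC₁, hf₁⟩ := exists_stM_fact A₁ hs₁ hn₁
    obtain ⟨B₂, C₂, hB₂, hCs₂, hC₂, hf₂⟩ := exists_stM_fact A₂ hs₂ hn₂
    set Ahat : Matrix (V ⊕ W) (V ⊕ W) ℝ := Matrix.fromBlocks A₁ 0 0 A₂ with hAhat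
    have hsym : Ahat.IsSymm := by
      show Ahatᵀ = Ahat
      rw [hAhat, Matrix.fromBlocks_transpose]
      simp only [Matrix.transpose_zero]
      rw [hs₁.eq, hs₂.eq]
    have hnn : EntrywiseNonneg Ahat := by
      rintro (i | i) (j | j)
      · exact hn₁ i j
      · exact le_refl 0
      · exact le_refl 0
      · exact hn₂ i j
    have hpat : ∀ x y, (disjUnion G H).Adj x y ↔ 0 < Ahat x y := by
      rintro (i | i) (j | j)
      · exact hp₁ i j
      · exact ⟨fun h => h.elim, fun h => absurd rfl h.ne⟩
      · exact ⟨fun h => h.elim, fun h => absurd rfl h.ne⟩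
      · exact hp₂ i j
    have hfact : Ahat = (Matrix.fromBlocks B₁ 0 0 B₂) * (Matrix.fromBlocks C₁ 0 0 C₂) *
        (Matrix.fromBlocks B₁ 0 0 B₂)ᵀ := by
      rw [Matrix.fromBlocks_transpose, Matrix.fromBlocks_multiply, Matrix.fromBlocks_multiply]
      simp only [Matrix.mul_zero, Matrix.zero_mul, add_zero, zero_add,
        Matrix.transpose_zero]
      rw [hAhat, ← hf₁, ← hf₂]
    have hBnn : EntrywiseNonneg (Matrix.fromBlocks B₁ 0 0 B₂) := by
      rintro (i | i) (j | j)
      · exact hB₁ i j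
      · exact le_refl 0
      · exact le_refl 0
      · exact hB₂ i j
    have hCnn : EntrywiseNonneg (Matrix.fromBlocks C₁ 0 0 C₂) := by
      rintro (i | i) (j | j)
      · exact hC₁ i j
      · exact le_refl 0
      · exact le_refl 0
      · exact hC₂ i j
    have hCsym : (Matrix.fromBlocks C₁ 0 0 C₂).IsSymm := by
      show (Matrix.fromBlocks C₁ 0 0 C₂)ᵀ = _
      rw [Matrix.fromBlocks_transpose]
      simp only [Matrix.transpose_zero]
      rw [hCs₁.eq, hCs₂.eq]
    calc stMGraph (disjUnion G H) ≤ stM Ahat := stMGraph_le _ _ hsym hnn hpat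
      _ ≤ Fintype.card (Fin (stM A₁) ⊕ Fin (stM A₂)) :=
          stM_le_card _ _ _ hBnn hCsym hCnn hfact
      _ = stMGraph G + stMGraph H := by
          rw [Fintype.card_sum, Fintype.card_fin, Fintype.card_fin, hst₁, hst₂]
  · -- lower bound: split an optimal factorization
    obtain ⟨A, hs, hn, hp, hst⟩ := exists_stMGraph (disjUnion G H)
    obtain ⟨B, C, hB, hCs, hC, hf⟩ := exists_stM_fact A hs hn
    rw [← hst]
    -- off-diagonal blocks of A vanish
    have hzero : ∀ (v : V) (w : W), A (Sum.inl v) (Sum.inr w) = 0 := by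
      intro v w
      refine le_antisymm (not_lt.mp fun h => ?_) (hn _ _)
      exact (hp (Sum.inl v) (Sum.inr w)).mpr h
    -- termwise vanishing
    have hterm : ∀ (v : V) (w : W) (p q : Fin (stM A)),
        B (Sum.inl v) p * C p q * B (Sum.inr w) q = 0 := by
      intro v w p q
      have h0 : ∑ q' : Fin (stM A), ∑ p' : Fin (stM A),
          B (Sum.inl v) p' * C p' q' * B (Sum.inr w) q' = 0 := by
        have h1 := hzero v w
        rw [hf] at h1
        simpa only [Matrix.mul_apply, Matrix.transpose_apply, Finset.sum_mul] using h1
      have hnn : ∀ (p' q' : Fin (stM A)),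
          (0:ℝ) ≤ B (Sum.inl v) p' * C p' q' * B (Sum.inr w) q' := fun p' q' =>
        mul_nonneg (mul_nonneg (hB _ _) (hC _ _)) (hB _ _)
      have h2 := (Finset.sum_eq_zero_iff_of_nonneg
        (fun q' _ => Finset.sum_nonneg fun p' _ => hnn p' q')).mp h0 q (Finset.mem_univ q)
      exact (Finset.sum_eq_zero_iff_of_nonneg
        (fun p' _ => hnn p' q)).mp h2 p (Finset.mem_univ p)
    have hCapp : ∀ p q : Fin (stM A), C q p = C p q := fun p q => hCs.apply p q
    have hCzero : ∀ p q : Fin (stM A), (∃ v, B (Sum.inl v) p ≠ 0) →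
        (∃ w, B (Sum.inr w) q ≠ 0) → C p q = 0 := by
      rintro p q ⟨v, hv⟩ ⟨w, hw⟩
      have h := hterm v w p q
      rcases mul_eq_zero.mp h with h' | h'
      · rcases mul_eq_zero.mp h' with h'' | h''
        · exact absurd h'' hv
        · exact h''
      · exact absurd h' hw
    -- support sets
    set SV : Finset (Fin (stM A)) := Finset.univ.filter (fun p => ∃ v, B (Sum.inl v) p ≠ 0)
      with hSV
    set TW : Finset (Fin (stM A)) := Finset.univ.filter (fun p => ∃ w, B (Sum.inr w) p ≠ 0)
      with hTW
    have hSVmem : ∀ p : Fin (stM A), p ∈ SV ↔ ∃ v, B (Sum.inl v) p ≠ 0 := by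
      intro p; rw [hSV]; simp
    have hTWmem : ∀ p : Fin (stM A), p ∈ TW ↔ ∃ w, B (Sum.inr w) p ≠ 0 := by
      intro p; rw [hTW]; simp
    -- the G side
    have hG0 : ∀ (u u' : V) (p q : Fin (stM A)), p ∉ SV \ TW →
        B (Sum.inl u) p * C p q * B (Sum.inl u') q = 0 := by
      intro u u' p q hps
      rw [Finset.mem_sdiff, not_and_or, not_not] at hps
      rcases hps with hps | hps
      · have : B (Sum.inl u) p = 0 := by
          by_contra h
          exact hps ((hSVmem p).mpr ⟨u, h⟩)
        rw [this, zero_mul, zero_mul]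
      · by_cases hq : B (Sum.inl u') q = 0
        · rw [hq, mul_zero]
        · have hC0 : C q p = 0 := hCzero q p ⟨u', hq⟩ ((hTWmem p).mp hps)
          rw [(hCapp q p).trans hC0, mul_zero, zero_mul]
    have hG0' : ∀ (u u' : V) (p q : Fin (stM A)), q ∉ SV \ TW →
        B (Sum.inl u) p * C p q * B (Sum.inl u') q = 0 := by
      intro u u' p q hqs
      rw [Finset.mem_sdiff, not_and_or, not_not] at hqs
      rcases hqs with hqs | hqs
      · have : B (Sum.inl u') q = 0 := by
          by_contra h
          exact hqs ((hSVmem q).mpr ⟨u', h⟩)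
        rw [this, mul_zero]
      · by_cases hpu : B (Sum.inl u) p = 0
        · rw [hpu, zero_mul, zero_mul]
        · have hC0 : C p q = 0 := hCzero p q ⟨u, hpu⟩ ((hTWmem q).mp hqs)
          rw [hC0, mul_zero, zero_mul]
    -- the H side
    have hH0 : ∀ (u u' : W) (p q : Fin (stM A)), p ∉ TW →
        B (Sum.inr u) p * C p q * B (Sum.inr u') q = 0 := by
      intro u u' p q hps
      have : B (Sum.inr u) p = 0 := by
        by_contra h
        exact hps ((hTWmem p).mpr ⟨u, h⟩)
      rw [this, zero_mul, zero_mul]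
    have hH0' : ∀ (u u' : W) (p q : Fin (stM A)), q ∉ TW →
        B (Sum.inr u) p * C p q * B (Sum.inr u') q = 0 := by
      intro u u' p q hqs
      have : B (Sum.inr u') q = 0 := by
        by_contra h
        exact hqs ((hTWmem q).mpr ⟨u', h⟩)
      rw [this, mul_zero]
    -- bounds for the two pieces
    have hAG : stM (A.submatrix Sum.inl Sum.inl) ≤ (SV \ TW).card :=
      stM_submatrix_le A B C hB hCs hC hf Sum.inl (SV \ TW) hG0 hG0'
    have hAH : stM (A.submatrix Sum.inr Sum.inr) ≤ TW.card :=
      stM_submatrix_le A B C hB hCs hC hf Sum.inr TW hH0 hH0'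
    have hGle : stMGraph G ≤ stM (A.submatrix Sum.inl Sum.inl) := by
      refine stMGraph_le G _ (hs.submatrix _) (fun i j => hn _ _) (fun i j => ?_)
      exact hp (Sum.inl i) (Sum.inl j)
    have hHle : stMGraph H ≤ stM (A.submatrix Sum.inr Sum.inr) := by
      refine stMGraph_le H _ (hs.submatrix _) (fun i j => hn _ _) (fun i j => ?_)
      exact hp (Sum.inr i) (Sum.inr j)
    have hcards : (SV \ TW).card + TW.card ≤ stM A := by
      rw [← Finset.card_union_of_disjoint Finset.sdiff_disjoint]
      calc ((SV \ TW) ∪ TW).card ≤ (Finset.univ : Finset (Fin (stM A))).card :=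
            Finset.card_le_card (Finset.subset_univ _)
        _ = stM A := by rw [Finset.card_univ, Fintype.card_fin]
    calc stMGraph G + stMGraph H
        ≤ (SV \ TW).card + TW.card := add_le_add (hGle.trans hAG) (hHle.trans hAH)
      _ ≤ stM A := hcards

/-- `st₊` of the single loopless vertex is `0`. -/
lemma stMGraph_emptyGraph_fin_one : stMGraph (emptyGraph (Fin 1)) = 0 := by
  have h0 : stM (0 : Matrix (Fin 1) (Fin 1) ℝ) = 0 := by
    refine Nat.le_zero.mp (Nat.sInf_le ?_)
    refine ⟨(0 : Matrix (Fin 1) (Fin 0) ℝ), (0 : Matrix (Fin 0) (Fin 0) ℝ),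
      fun i j => le_refl 0, ?_, fun i j => le_refl 0, ?_⟩
    · show (0 : Matrix (Fin 0) (Fin 0) ℝ)ᵀ = 0
      rw [Matrix.transpose_zero]
    · rw [Matrix.mul_zero, Matrix.zero_mul]
  refine Nat.le_zero.mp ?_
  rw [← h0]
  refine stMGraph_le _ _ ?_ (fun i j => le_refl 0) (fun i j => by
    simp [emptyGraph, Matrix.zero_apply])
  show (0 : Matrix (Fin 1) (Fin 1) ℝ)ᵀ = 0
  rw [Matrix.transpose_zero]

/-- For any graphs `G` and `H` (simple, allowing loops),
`st₊(G ∪ H) = st₊(G) + st₊(H)`; in particular `st₊(G ∪ K₁) = st₊(G)` where `K₁`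
is a single vertex with no loop. Here `st₊` of a graph is defined via SN-Trifactorizations
of symmetric nonnegative matrices with the given pattern graph. -/
theorem stMGraph_disjUnion {V W : Type*} [Fintype V] [Fintype W]
    (G : LGraph V) (H : LGraph W) :
    stMGraph (disjUnion G H) = stMGraph G + stMGraph H ∧
    stMGraph (disjUnion G (emptyGraph (Fin 1))) = stMGraph G := by
  refine ⟨stMGraph_disjUnion_eq G H, ?_⟩
  rw [stMGraph_disjUnion_eq G (emptyGraph (Fin 1)), stMGraph_emptyGraph_fin_one, add_zero]

end LGraph
end

section
/- For every simple graph G that allows loops, st_+(G) equals the minimum of |𝒞| over all set-join covers 𝒞 of G. That is, the SNT-rank of G equals the minimal order of a set-join cover of G. -/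
open Matrix

namespace LGraph

variable {V W : Type*}

section Aux

private lemma sum_pos_iff_aux {ι : Type*} [Fintype ι] (f : ι → ℝ) (h : ∀ i, 0 ≤ f i) :
    0 < ∑ i, f i ↔ ∃ i, 0 < f i := by
  constructor
  · intro hs
    by_contra hc
    push_neg at hc
    have : ∑ i, f i ≤ 0 := Finset.sum_nonpos fun i _ => hc i
    linarith
  · rintro ⟨i, hi⟩
    exact Finset.sum_pos' (fun j _ => h j) ⟨i, Finset.mem_univ i, hi⟩

private lemma mul3_pos_iff {a b c : ℝ} (ha : 0 ≤ a) (hb : 0 ≤ b) (hc : 0 ≤ c) :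
    0 < a * b * c ↔ 0 < a ∧ 0 < b ∧ 0 < c := by
  constructor
  · intro h
    refine ⟨ha.lt_of_ne' ?_, hb.lt_of_ne' ?_, hc.lt_of_ne' ?_⟩ <;>
      · intro heq; rw [heq] at h; simp at h
  · rintro ⟨h1, h2, h3⟩
    exact mul_pos (mul_pos h1 h2) h3

private lemma triple_apply {V : Type*} [Fintype V] {k : ℕ}
    (B : Matrix V (Fin k) ℝ) (C : Matrix (Fin k) (Fin k) ℝ) (u v : V) :
    (B * C * Bᵀ) u v = ∑ q, ∑ p, B u p * C p q * B v q := by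
  simp [Matrix.mul_apply, Finset.sum_mul]

private lemma triple_pos_iff {V : Type*} [Fintype V] {k : ℕ}
    {B : Matrix V (Fin k) ℝ} {C : Matrix (Fin k) (Fin k) ℝ}
    (hB : EntrywiseNonneg B) (hC : EntrywiseNonneg C) (u v : V) :
    0 < (B * C * Bᵀ) u v ↔ ∃ p q : Fin k, 0 < B u p ∧ 0 < C p q ∧ 0 < B v q := by
  rw [triple_apply]
  have hnn : ∀ q p : Fin k, 0 ≤ B u p * C p q * B v q := fun q p =>
    mul_nonneg (mul_nonneg (hB u p) (hC p q)) (hB v q)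
  rw [sum_pos_iff_aux _ (fun q => Finset.sum_nonneg fun p _ => hnn q p)]
  constructor
  · rintro ⟨q, hq⟩
    obtain ⟨p, hp⟩ := (sum_pos_iff_aux _ (hnn q)).mp hq
    obtain ⟨h1, h2, h3⟩ := (mul3_pos_iff (hB u p) (hC p q) (hB v q)).mp hp
    exact ⟨p, q, h1, h2, h3⟩
  · rintro ⟨p, q, h1, h2, h3⟩
    exact ⟨q, (sum_pos_iff_aux _ (hnn q)).mpr
      ⟨p, (mul3_pos_iff (hB u p) (hC p q) (hB v q)).mpr ⟨h1, h2, h3⟩⟩⟩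

/-- From a set-join cover, build a matrix with pattern `G` and small `stM`. -/
private lemma cover_to_matrix {V : Type*} [Fintype V] (G : LGraph V)
    (𝒞 : Set (Sym2 (Set V))) (hcov : G.IsSetJoinCover 𝒞) :
    ∃ A : Matrix V V ℝ, A.IsSymm ∧ EntrywiseNonneg A ∧
      (∀ i j, G.Adj i j ↔ 0 < A i j) ∧ stM A ≤ coverOrder 𝒞 := by
  classical
  set k := coverOrder 𝒞 with hk
  have hfin : (comps 𝒞).Finite := Set.toFinite _
  have hcard : Nat.card (comps 𝒞) = k := by
    rw [Nat.card_coe_set_eq]; rfl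
  obtain ⟨e⟩ : Nonempty (comps 𝒞 ≃ Fin k) := ⟨Finite.equivFinOfCardEq hcard⟩
  set Kfun : Fin k → Set V := fun p => ((e.symm p : comps 𝒞) : Set V) with hKfun
  set B : Matrix V (Fin k) ℝ := fun i p => if i ∈ Kfun p then 1 else 0 with hB
  set C : Matrix (Fin k) (Fin k) ℝ :=
    fun p q => if s(Kfun p, Kfun q) ∈ 𝒞 then 1 else 0 with hC
  have hBnn : EntrywiseNonneg B := by
    intro i p; rw [hB]; dsimp only; split <;> norm_num
  have hCnn : EntrywiseNonneg C := by
    intro p q; rw [hC]; dsimp only; split <;> norm_num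
  have hCsymm : C.IsSymm := by
    ext p q
    show C q p = C p q
    rw [hC]; dsimp only
    rw [Sym2.eq_swap]
  refine ⟨B * C * Bᵀ, ?_, ?_, ?_, ?_⟩
  · show (B * C * Bᵀ)ᵀ = B * C * Bᵀ
    rw [Matrix.transpose_mul, Matrix.transpose_mul, Matrix.transpose_transpose,
      hCsymm, Matrix.mul_assoc]
  · intro i j
    rw [triple_apply]
    exact Finset.sum_nonneg fun q _ => Finset.sum_nonneg fun p _ =>
      mul_nonneg (mul_nonneg (hBnn i p) (hCnn p q)) (hBnn j q)
  · intro i j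
    rw [triple_pos_iff hBnn hCnn, hcov.2 i j]
    constructor
    · rintro ⟨z, hz, K, L, rfl, hiK, hjL⟩
      have hKc : K ∈ comps 𝒞 := ⟨_, hz, Sym2.mem_mk_left K L⟩
      have hLc : L ∈ comps 𝒞 := ⟨_, hz, Sym2.mem_mk_right K L⟩
      refine ⟨e ⟨K, hKc⟩, e ⟨L, hLc⟩, ?_, ?_, ?_⟩
      · rw [hB]; dsimp only
        rw [if_pos]; · norm_num
        show i ∈ Kfun _
        rw [hKfun]; dsimp only; rw [e.symm_apply_apply]; exact hiK
      · rw [hC]; dsimp only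
        rw [if_pos]; · norm_num
        have h1 : Kfun (e ⟨K, hKc⟩) = K := by
          rw [hKfun]; dsimp only; rw [e.symm_apply_apply]
        have h2 : Kfun (e ⟨L, hLc⟩) = L := by
          rw [hKfun]; dsimp only; rw [e.symm_apply_apply]
        rw [h1, h2]; exact hz
      · rw [hB]; dsimp only
        rw [if_pos]; · norm_num
        show j ∈ Kfun _
        rw [hKfun]; dsimp only; rw [e.symm_apply_apply]; exact hjL
    · rintro ⟨p, q, h1, h2, h3⟩
      have hiK : i ∈ Kfun p := by
        by_contra hc; rw [hB] at h1; dsimp only at h1; rw [if_neg hc] at h1; linarith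
      have hjL : j ∈ Kfun q := by
        by_contra hc; rw [hB] at h3; dsimp only at h3; rw [if_neg hc] at h3; linarith
      have hmem : s(Kfun p, Kfun q) ∈ 𝒞 := by
        by_contra hc; rw [hC] at h2; dsimp only at h2; rw [if_neg hc] at h2; linarith
      exact ⟨_, hmem, Kfun p, Kfun q, rfl, hiK, hjL⟩
  · exact Nat.sInf_le ⟨B, C, hBnn, hCsymm, hCnn, rfl⟩

/-- From a trifactorization of a matrix with pattern `G`, build a small set-join
cover. -/
private lemma matrix_to_cover {V : Type*} [Fintype V] (G : LGraph V)
    {k : ℕ} {B : Matrix V (Fin k) ℝ} {C : Matrix (Fin k) (Fin k) ℝ}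
    (hBnn : EntrywiseNonneg B) (hCsymm : C.IsSymm) (hCnn : EntrywiseNonneg C)
    (hpat : ∀ i j, G.Adj i j ↔ 0 < (B * C * Bᵀ) i j) :
    ∃ 𝒞 : Set (Sym2 (Set V)), G.IsSetJoinCover 𝒞 ∧ coverOrder 𝒞 ≤ k := by
  classical
  set Kset : Fin k → Set V := fun p => {i | 0 < B i p} with hKset
  set 𝒞 : Set (Sym2 (Set V)) := {z | ∃ p q : Fin k,
    0 < C p q ∧ (Kset p).Nonempty ∧ (Kset q).Nonempty ∧ z = s(Kset p, Kset q)} with h𝒞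
  have hsub : comps 𝒞 ⊆ Set.range Kset := by
    rintro K ⟨z, hz, hKz⟩
    obtain ⟨p, q, -, -, -, rfl⟩ := hz
    rcases Sym2.mem_iff.mp hKz with rfl | rfl
    · exact ⟨p, rfl⟩
    · exact ⟨q, rfl⟩
  refine ⟨𝒞, ⟨?_, ?_⟩, ?_⟩
  · rintro z ⟨p, q, -, hp, hq, rfl⟩ K hK
    rcases Sym2.mem_iff.mp hK with rfl | rfl
    · exact hp
    · exact hq
  · intro u v
    rw [hpat u v, triple_pos_iff hBnn hCnn]
    constructor
    · rintro ⟨p, q, h1, h2, h3⟩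
      refine ⟨s(Kset p, Kset q), ⟨p, q, h2, ⟨u, h1⟩, ⟨v, h3⟩, rfl⟩,
        Kset p, Kset q, rfl, h1, h3⟩
    · rintro ⟨z, hz, K, L, rfl, huK, hvL⟩
      obtain ⟨p, q, hpq, -, -, hzeq⟩ := hz
      rcases Sym2.eq_iff.mp hzeq with ⟨rfl, rfl⟩ | ⟨rfl, rfl⟩
      · exact ⟨p, q, huK, hpq, hvL⟩
      · refine ⟨q, p, huK, ?_, hvL⟩
        have := congrFun (congrFun hCsymm q) p
        rw [Matrix.transpose_apply] at this
        rw [← this]; exact hpq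
  · calc coverOrder 𝒞 ≤ (Set.range Kset).ncard :=
          Set.ncard_le_ncard hsub (Set.finite_range _)
      _ ≤ Nat.card (Fin k) := by
          rw [← Set.ncard_univ]
          rw [← Set.image_univ]
          exact Set.ncard_image_le (Set.finite_univ)
      _ = k := by simp

end Aux

/-- For every graph `G` (simple, allowing loops), the SNT-rank of `G`
(defined via SN-Trifactorizations of symmetric nonnegative matrices with pattern graph `G`)
equals the minimal order of a set-join cover of `G`. -/

theorem stMGraph_eq_min_coverOrder {V : Type*} [Fintype V] (G : LGraph V) :
    stMGraph G =
      sInf {k : ℕ | ∃ 𝒞 : Set (Sym2 (Set V)), G.IsSetJoinCover 𝒞 ∧ coverOrder 𝒞 = k} := by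
  classical
  -- the trivial cover shows the RHS set is nonempty
  have htriv : ∃ 𝒞 : Set (Sym2 (Set V)), G.IsSetJoinCover 𝒞 := by
    refine ⟨{z | ∃ u v : V, G.Adj u v ∧ z = s(({u} : Set V), ({v} : Set V))}, ?_, ?_⟩
    · rintro z ⟨u, v, -, rfl⟩ K hK
      rcases Sym2.mem_iff.mp hK with rfl | rfl
      · exact ⟨u, rfl⟩
      · exact ⟨v, rfl⟩
    · intro u v
      constructor
      · intro h
        exact ⟨s(({u} : Set V), ({v} : Set V)), ⟨u, v, h, rfl⟩, {u}, {v}, rfl, rfl, rfl⟩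
      · rintro ⟨z, ⟨a, b, hab, rfl⟩, K, L, hzeq, huK, hvL⟩
        rcases Sym2.eq_iff.mp hzeq.symm with ⟨rfl, rfl⟩ | ⟨rfl, rfl⟩
        · rw [Set.mem_singleton_iff] at huK hvL; subst huK; subst hvL; exact hab
        · rw [Set.mem_singleton_iff] at huK hvL; subst huK; subst hvL; exact G.symm hab
  set S2 := {k : ℕ | ∃ 𝒞 : Set (Sym2 (Set V)), G.IsSetJoinCover 𝒞 ∧ coverOrder 𝒞 = k}
    with hS2
  have hS2ne : S2.Nonempty := by
    obtain ⟨𝒞, h𝒞⟩ := htriv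
    exact ⟨coverOrder 𝒞, 𝒞, h𝒞, rfl⟩
  -- the set defining `stMGraph` is nonempty
  set S1 := {k : ℕ | ∃ A : Matrix V V ℝ, A.IsSymm ∧ EntrywiseNonneg A ∧
    (∀ i j, G.Adj i j ↔ 0 < A i j) ∧ stM A = k} with hS1
  have hS1ne : S1.Nonempty := by
    obtain ⟨𝒞, h𝒞⟩ := htriv
    obtain ⟨A, h1, h2, h3, -⟩ := cover_to_matrix G 𝒞 h𝒞
    exact ⟨stM A, A, h1, h2, h3, rfl⟩
  apply le_antisymm
  · -- stMGraph G ≤ sInf S2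
    have hmem : sInf S2 ∈ S2 := Nat.sInf_mem hS2ne
    obtain ⟨𝒞, h𝒞, hord⟩ := hmem
    obtain ⟨A, h1, h2, h3, h4⟩ := cover_to_matrix G 𝒞 h𝒞
    have : stMGraph G ≤ stM A := Nat.sInf_le ⟨A, h1, h2, h3, rfl⟩
    rw [hord] at h4
    exact this.trans h4
  · -- sInf S2 ≤ stMGraph G
    have hmem : stMGraph G ∈ S1 := Nat.sInf_mem hS1ne
    obtain ⟨A, hsym, hnn, hpat, hstM⟩ := hmem
    -- the set defining `stM A` is nonempty
    have hstne : {k : ℕ | ∃ B : Matrix V (Fin k) ℝ, ∃ C : Matrix (Fin k) (Fin k) ℝ,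
        EntrywiseNonneg B ∧ C.IsSymm ∧ EntrywiseNonneg C ∧ A = B * C * Bᵀ}.Nonempty := by
      set n := Fintype.card V with hn
      set e : V ≃ Fin n := Fintype.equivFin V with he
      refine ⟨n, fun i p => if e i = p then 1 else 0,
        fun p q => A (e.symm p) (e.symm q), ?_, ?_, ?_, ?_⟩
      · intro i p; dsimp only; split <;> norm_num
      · ext p q
        show A (e.symm q) (e.symm p) = A (e.symm p) (e.symm q)
        have := congrFun (congrFun hsym (e.symm p)) (e.symm q)
        rw [Matrix.transpose_apply] at this
        exact this
      · intro p q; exact hnn _ _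
      · ext u v
        refine Eq.trans ?_ (triple_apply (k := n) _ _ u v).symm
        simp only [ite_mul, one_mul, zero_mul, mul_ite, mul_one, mul_zero,
          Finset.sum_ite_eq, Finset.mem_univ, if_true]
        simp
    obtain ⟨B, C, hBnn, hCsymm, hCnn, hfac⟩ := Nat.sInf_mem hstne
    have hpat' : ∀ i j, G.Adj i j ↔ 0 < (B * C * Bᵀ) i j := by
      intro i j; rw [hpat i j, ← hfac]
    obtain ⟨𝒞, h𝒞, hord⟩ := matrix_to_cover G hBnn hCsymm hCnn hpat'
    have : sInf S2 ≤ coverOrder 𝒞 := Nat.sInf_le ⟨𝒞, h𝒞, rfl⟩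
    exact this.trans (hord.trans hstM.le)


end LGraph
end

section
/- Let 𝒞 be a set-join cover of a graph G with vertex set [n]. Suppose there exist a subset V' ⊆ V(𝒞) with |V'| = t and a family V = {L_1, …, L_s} of subsets of [n] with s < t, such that every element of V' can be written as a union of some elements of V. Then 𝒞 is not an optimal set-join cover of G, i.e., there is a set-join cover of G of order strictly smaller than |𝒞|. -/
open Matrix

namespace LGraph

variable {V W : Type*}

/-- Let `𝒞` be a set-join cover of a graph `G` on vertex set `Fin n`.
If there exist `V' ⊆ V(𝒞)` with `|V'| = t` and a family `L₁, …, L_s` of subsets of the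
vertex set with `s < t` such that every element of `V'` is a union of some of the `Lᵢ`,
then `𝒞` is not optimal: there is a set-join cover of `G` of strictly smaller order. -/
theorem not_optimal_of_union_representation {n : ℕ} (G : LGraph (Fin n))
    (𝒞 : Set (Sym2 (Set (Fin n)))) (hcov : G.IsSetJoinCover 𝒞)
    (t s : ℕ) (V' : Set (Set (Fin n))) (hsub : V' ⊆ comps 𝒞)
    (hcard : V'.ncard = t) (hst : s < t) (L : Fin s → Set (Fin n))
    (hunion : ∀ K ∈ V', ∃ I : Set (Fin s), K = ⋃ i ∈ I, L i) :
    ∃ 𝒟 : Set (Sym2 (Set (Fin n))), G.IsSetJoinCover 𝒟 ∧ coverOrder 𝒟 < coverOrder 𝒞 := by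
  classical
  have h' : ∀ K : Set (Fin n), ∃ I : Set (Fin s), K ∈ V' → K = ⋃ i ∈ I, L i := by
    intro K
    by_cases hK : K ∈ V'
    · obtain ⟨I, hI⟩ := hunion K hK; exact ⟨I, fun _ => hI⟩
    · exact ⟨∅, fun h => absurd h hK⟩
  choose I hI using h'
  set rep : Set (Fin n) → Set (Set (Fin n)) :=
    fun K => if K ∈ V' then {A | A.Nonempty ∧ ∃ i ∈ I K, A = L i} else {K} with hrep
  have rep_sub : ∀ K, ∀ A ∈ rep K, A ⊆ K := by
    intro K A hA
    by_cases hK : K ∈ V'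
    · simp only [hrep, if_pos hK, Set.mem_setOf_eq] at hA
      obtain ⟨-, i, hi, rfl⟩ := hA
      rw [hI K hK]
      exact Set.subset_biUnion_of_mem hi
    · simp only [hrep, if_neg hK, Set.mem_singleton_iff] at hA
      subst hA; exact subset_rfl
  have rep_mem : ∀ K, ∀ u ∈ K, ∃ A ∈ rep K, u ∈ A := by
    intro K u hu
    by_cases hK : K ∈ V'
    · have hu' := hu
      rw [hI K hK, Set.mem_iUnion₂] at hu'
      obtain ⟨i, hi, hui⟩ := hu'
      refine ⟨L i, ?_, hui⟩
      simp only [hrep, if_pos hK, Set.mem_setOf_eq]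
      exact ⟨⟨u, hui⟩, i, hi, rfl⟩
    · refine ⟨K, ?_, hu⟩
      simp [hrep, if_neg hK]
  have rep_ne : ∀ K, K.Nonempty → ∀ A ∈ rep K, A.Nonempty := by
    intro K hKne A hA
    by_cases hK : K ∈ V'
    · simp only [hrep, if_pos hK, Set.mem_setOf_eq] at hA; exact hA.1
    · simp only [hrep, if_neg hK, Set.mem_singleton_iff] at hA; subst hA; exact hKne
  set 𝒟 : Set (Sym2 (Set (Fin n))) :=
    {q | ∃ p ∈ 𝒞, ∃ K L' : Set (Fin n), p = s(K, L') ∧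
      ∃ A ∈ rep K, ∃ B ∈ rep L', q = s(A, B)} with h𝒟
  refine ⟨𝒟, ⟨?_, ?_⟩, ?_⟩
  · -- nonemptiness of components
    rintro q ⟨p, hp, K, L', hpKL, A, hA, B, hB, rfl⟩ C hC
    have hKne : K.Nonempty := hcov.1 p hp K (by rw [hpKL]; exact Sym2.mem_mk_left _ _)
    have hLne : L'.Nonempty := hcov.1 p hp L' (by rw [hpKL]; exact Sym2.mem_mk_right _ _)
    rw [Sym2.mem_iff] at hC
    rcases hC with rfl | rfl
    · exact rep_ne _ hKne _ hA
    · exact rep_ne _ hLne _ hB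
  · -- edge cover condition
    intro u v
    rw [hcov.2 u v]
    constructor
    · rintro ⟨p, hp, K, L', hpKL, huK, hvL⟩
      obtain ⟨A, hA, huA⟩ := rep_mem K u huK
      obtain ⟨B, hB, hvB⟩ := rep_mem L' v hvL
      exact ⟨s(A, B), ⟨p, hp, K, L', hpKL, A, hA, B, hB, rfl⟩, A, B, rfl, huA, hvB⟩
    · rintro ⟨q, ⟨p, hp, K, L', hpKL, A, hA, B, hB, rfl⟩, A', B', hq', huA, hvB⟩
      rw [Sym2.eq_iff] at hq'
      rcases hq' with ⟨rfl, rfl⟩ | ⟨rfl, rfl⟩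
      · exact ⟨p, hp, K, L', hpKL, rep_sub K A hA huA, rep_sub L' B hB hvB⟩
      · exact ⟨p, hp, L', K, by rw [hpKL, Sym2.eq_swap],
          rep_sub L' B hB huA, rep_sub K A hA hvB⟩
  · -- order strictly decreases
    have hsubD : comps 𝒟 ⊆ (comps 𝒞 \ V') ∪ Set.range L := by
      rintro C ⟨q, ⟨p, hp, K, L', hpKL, A, hA, B, hB, rfl⟩, hCq⟩
      have key : ∀ K0 : Set (Fin n), K0 ∈ p → ∀ C0 ∈ rep K0,
          C0 ∈ (comps 𝒞 \ V') ∪ Set.range L := by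
        intro K0 hK0 C0 hC0
        by_cases hK : K0 ∈ V'
        · simp only [hrep, if_pos hK, Set.mem_setOf_eq] at hC0
          obtain ⟨-, i, -, rfl⟩ := hC0
          exact Or.inr ⟨i, rfl⟩
        · simp only [hrep, if_neg hK, Set.mem_singleton_iff] at hC0
          subst hC0
          exact Or.inl ⟨⟨p, hp, hK0⟩, hK⟩
      rw [Sym2.mem_iff] at hCq
      rcases hCq with rfl | rfl
      · exact key K (by rw [hpKL]; exact Sym2.mem_mk_left _ _) _ hA
      · exact key L' (by rw [hpKL]; exact Sym2.mem_mk_right _ _) _ hB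
    have h1 : (comps 𝒟).ncard ≤ ((comps 𝒞 \ V') ∪ Set.range L).ncard :=
      Set.ncard_le_ncard hsubD (Set.toFinite _)
    have h2 : ((comps 𝒞 \ V') ∪ Set.range L).ncard ≤
        (comps 𝒞 \ V').ncard + (Set.range L).ncard := Set.ncard_union_le _ _
    have h3 : (comps 𝒞 \ V').ncard = (comps 𝒞).ncard - t := by
      rw [Set.ncard_diff hsub, hcard]
    have h4 : (Set.range L).ncard ≤ s := by
      rw [← Set.image_univ]
      calc (L '' Set.univ).ncard ≤ (Set.univ : Set (Fin s)).ncard := Set.ncard_image_le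
        _ = s := by rw [Set.ncard_univ, Nat.card_eq_fintype_card, Fintype.card_fin]
    have h5 : t ≤ (comps 𝒞).ncard := hcard ▸ Set.ncard_le_ncard hsub (Set.toFinite _)
    unfold coverOrder
    omega

end LGraph
end

section
/- If 𝒞 is an optimal set-join cover of a graph G, then the family of component sets V(𝒞) has a system of distinct representatives: there exists an injective choice of elements x_K ∈ K, one for each component K ∈ V(𝒞). -/
open Matrix

namespace LGraph

variable {V W : Type*}

/-- If `𝒞` is an optimal set-join cover of a graph `G`, then the family
of components `V(𝒞)` has a system of distinct representatives: an injective choice of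
an element of each component. -/
theorem exists_sdr_of_optimal {V : Type*} [Fintype V] (G : LGraph V)
    (𝒞 : Set (Sym2 (Set V))) (hopt : G.IsOptimalCover 𝒞) :
    ∃ f : comps 𝒞 → V, Function.Injective f ∧ ∀ K : comps 𝒞, f K ∈ (K : Set V) := by
  classical
  obtain ⟨⟨hne, hadj⟩, hord⟩ := hopt
  -- every component is nonempty
  have hcne : ∀ K ∈ comps 𝒞, (K : Set V).Nonempty := by
    rintro K ⟨p, hp, hKp⟩
    exact hne p hp K hKp
  -- apply Hall's theorem to t : comps 𝒞 → Finset V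
  set t : comps 𝒞 → Finset V := fun K => (K : Set V).toFinset with ht
  suffices hhall : ∀ s : Finset (comps 𝒞), s.card ≤ (s.biUnion t).card by
    obtain ⟨f, hf, hf2⟩ :=
      (Finset.all_card_le_biUnion_card_iff_exists_injective t).mp hhall
    exact ⟨f, hf, fun K => by simpa [ht] using hf2 K⟩
  -- suppose Hall's condition fails for some s
  by_contra hhall
  push_neg at hhall
  obtain ⟨s, hs⟩ := hhall
  -- the bad family and its union
  set 𝒜 : Set (Set V) := Subtype.val '' (↑s : Set (comps 𝒞)) with h𝒜
  set U : Set V := ⋃ K ∈ 𝒜, K with hU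
  have h𝒜sub : 𝒜 ⊆ comps 𝒞 := by
    rintro K ⟨⟨K, hK⟩, _, rfl⟩; exact hK
  have h𝒜card : 𝒜.ncard = s.card := by
    rw [h𝒜, Set.ncard_image_of_injective _ Subtype.val_injective, Set.ncard_coe_finset]
  have hUcard : U.ncard < 𝒜.ncard := by
    have hUeq : U = ↑(s.biUnion fun K : comps 𝒞 => (K : Set V).toFinset) := by
      ext u
      simp only [hU, Set.mem_iUnion, Finset.coe_biUnion, Set.mem_iUnion, Set.mem_toFinset,
        Finset.mem_coe, h𝒜, Set.mem_image, Finset.mem_coe]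
      constructor
      · rintro ⟨K, ⟨⟨K', hK'⟩, hKs, rfl⟩, hu⟩
        exact ⟨⟨K', hK'⟩, hKs, hu⟩
      · rintro ⟨⟨K, hK⟩, hKs, hu⟩
        exact ⟨K, ⟨⟨K, hK⟩, hKs, rfl⟩, hu⟩
    rw [hUeq, Set.ncard_coe_finset, h𝒜card]
    exact hs
  -- the replacement of components
  set r : Set V → Set (Set V) := fun K =>
    if K ∈ 𝒜 then (fun u => ({u} : Set V)) '' K else {K} with hr
  have hr_sub : ∀ K K', K' ∈ r K → K' ⊆ K := by
    intro K K' hK'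
    simp only [hr] at hK'
    split_ifs at hK' with h
    · obtain ⟨u, hu, rfl⟩ := hK'
      simpa using hu
    · simp only [Set.mem_singleton_iff] at hK'; subst hK'; exact subset_rfl
  have hr_cov : ∀ K, ∀ u ∈ K, ∃ K' ∈ r K, u ∈ K' := by
    intro K u hu
    simp only [hr]
    split_ifs with h
    · exact ⟨{u}, ⟨u, hu, rfl⟩, rfl⟩
    · exact ⟨K, rfl, hu⟩
  have hr_ne : ∀ K, K.Nonempty → ∀ K' ∈ r K, (K' : Set V).Nonempty := by
    intro K hK K' hK'
    simp only [hr] at hK'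
    split_ifs at hK' with h
    · obtain ⟨u, _, rfl⟩ := hK'; exact ⟨u, rfl⟩
    · simp only [Set.mem_singleton_iff] at hK'; subst hK'; exact hK
  -- the new cover
  set 𝒟 : Set (Sym2 (Set V)) := {q | ∃ p ∈ 𝒞, ∃ K L K' L' : Set V,
    p = s(K, L) ∧ K' ∈ r K ∧ L' ∈ r L ∧ q = s(K', L')} with h𝒟
  have hDcov : G.IsSetJoinCover 𝒟 := by
    constructor
    · rintro q ⟨p, hp, K, L, K', L', rfl, hK', hL', rfl⟩ M hM
      rw [Sym2.mem_iff] at hM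
      rcases hM with rfl | rfl
      · exact hr_ne K (hne _ hp K (by simp)) M hK'
      · exact hr_ne L (hne _ hp L (by simp)) M hL'
    · intro u v
      rw [hadj u v]
      constructor
      · rintro ⟨p, hp, K, L, rfl, huK, hvL⟩
        obtain ⟨K', hK', huK'⟩ := hr_cov K u huK
        obtain ⟨L', hL', hvL'⟩ := hr_cov L v hvL
        exact ⟨s(K', L'), ⟨s(K, L), hp, K, L, K', L', rfl, hK', hL', rfl⟩,
          K', L', rfl, huK', hvL'⟩
      · rintro ⟨q, ⟨p, hp, K, L, K', L', rfl, hK', hL', rfl⟩, M, N, hq, huM, hvN⟩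
        rw [Sym2.eq_iff] at hq
        rcases hq with ⟨h1, h2⟩ | ⟨h1, h2⟩
        · subst h1; subst h2
          exact ⟨s(K, L), hp, K, L, rfl, hr_sub K _ hK' huM, hr_sub L _ hL' hvN⟩
        · subst h1; subst h2
          exact ⟨s(K, L), hp, L, K, Sym2.eq_swap.symm, hr_sub L _ hL' huM,
            hr_sub K _ hK' hvN⟩
  -- components of 𝒟 are contained in a small set
  have hDsub : comps 𝒟 ⊆ (comps 𝒞 \ 𝒜) ∪ ((fun u => ({u} : Set V)) '' U) := by
    rintro M ⟨q, ⟨p, hp, K, L, K', L', rfl, hK', hL', rfl⟩, hM⟩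
    rw [Sym2.mem_iff] at hM
    have key : ∀ J, J ∈ comps 𝒞 → ∀ J', J' ∈ r J →
        J' ∈ (comps 𝒞 \ 𝒜) ∪ ((fun u => ({u} : Set V)) '' U) := by
      intro J hJ J' hJ'
      simp only [hr] at hJ'
      split_ifs at hJ' with h
      · obtain ⟨u, hu, rfl⟩ := hJ'
        exact Or.inr ⟨u, Set.mem_biUnion h hu, rfl⟩
      · simp only [Set.mem_singleton_iff] at hJ'; subst hJ'
        exact Or.inl ⟨hJ, h⟩
    rcases hM with rfl | rfl
    · exact key K ⟨s(K, L), hp, by simp⟩ M hK'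
    · exact key L ⟨s(K, L), hp, by simp⟩ M hL'
  -- finiteness
  have hfinC : (comps 𝒞).Finite := Set.toFinite _
  have hfin𝒜 : 𝒜.Finite := hfinC.subset h𝒜sub
  have hfinU : U.Finite := Set.toFinite _
  -- cardinality estimate
  have hcard : coverOrder 𝒟 < coverOrder 𝒞 := by
    have h1 : (comps 𝒟).ncard ≤ (comps 𝒞 \ 𝒜).ncard +
        ((fun u => ({u} : Set V)) '' U).ncard := by
      refine le_trans (Set.ncard_le_ncard hDsub ?_) (Set.ncard_union_le _ _)
      exact (hfinC.diff.union (hfinU.image _))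
    have h2 : ((fun u => ({u} : Set V)) '' U).ncard = U.ncard :=
      Set.ncard_image_of_injective _ (fun a b h => by simpa using h)
    have h3 : (comps 𝒞 \ 𝒜).ncard = (comps 𝒞).ncard - 𝒜.ncard :=
      Set.ncard_diff h𝒜sub hfin𝒜
    have h4 : 𝒜.ncard ≤ (comps 𝒞).ncard := Set.ncard_le_ncard h𝒜sub hfinC
    have h5 : 0 < 𝒜.ncard := lt_of_le_of_lt (Nat.zero_le _) hUcard
    unfold coverOrder
    omega
  -- contradiction with optimality
  have hle : G.st ≤ coverOrder 𝒟 := Nat.sInf_le ⟨𝒟, hDcov, rfl⟩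
  omega

end LGraph
end

section
/- Let 𝒞 be an optimal set-join cover of a graph G. Then G contains a (not necessarily induced) subgraph that is isomorphic to the graph G(𝒞) of the cover. -/
open Matrix

namespace LGraph

variable {V W : Type*}

/-- If `𝒞` is an optimal set-join cover of a graph `G`, then `G` contains
a (not necessarily induced) subgraph isomorphic to the cover graph `G(𝒞)`: there is an
injection of the components into the vertices of `G` mapping edges of `G(𝒞)` to edges of `G`. -/
theorem coverGraph_isSubgraph_of_optimal {V : Type*} [Fintype V] (G : LGraph V)
    (𝒞 : Set (Sym2 (Set V))) (hopt : G.IsOptimalCover 𝒞) :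
    ∃ φ : comps 𝒞 → V, Function.Injective φ ∧
      ∀ K L : comps 𝒞, (coverGraph 𝒞).Adj K L → G.Adj (φ K) (φ L) := by
  classical
  obtain ⟨⟨hne, hcov⟩, hord⟩ := hopt
  haveI : Fintype (comps 𝒞) := Fintype.ofFinite _
  have hall : ∀ s : Finset (comps 𝒞),
      s.card ≤ (s.biUnion fun K => (K : Set V).toFinset).card := by
    intro s
    by_contra hlt
    push_neg at hlt
    set S : Set (Set V) := Subtype.val '' (↑s : Set (comps 𝒞)) with hSdef
    have hSsub : S ⊆ comps 𝒞 := by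
      rintro K ⟨k, _, rfl⟩; exact k.2
    set r : Set V → Set (Set V) :=
      fun K => if K ∈ S then {A | ∃ x ∈ K, A = ({x} : Set V)} else {K} with hrdef
    have hr_sub : ∀ {K A : Set V}, A ∈ r K → A ⊆ K := by
      intro K A hA
      by_cases h : K ∈ S
      · rw [hrdef] at hA; simp only [if_pos h, Set.mem_setOf_eq] at hA
        obtain ⟨x, hx, rfl⟩ := hA
        intro y hy; rw [Set.mem_singleton_iff] at hy; subst hy; exact hx
      · rw [hrdef] at hA; simp only [if_neg h, Set.mem_singleton_iff] at hA
        subst hA; exact subset_rfl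
    have pick : ∀ (M : Set V) (x : V), x ∈ M → ∃ M', M' ∈ r M ∧ x ∈ M' := by
      intro M x hx
      by_cases h : M ∈ S
      · refine ⟨{x}, ?_, rfl⟩
        rw [hrdef]; simp only [if_pos h, Set.mem_setOf_eq]; exact ⟨x, hx, rfl⟩
      · refine ⟨M, ?_, hx⟩
        rw [hrdef]; simp only [if_neg h, Set.mem_singleton_iff]
    set 𝒟 : Set (Sym2 (Set V)) :=
      {q | ∃ K L K' L' : Set V, s(K, L) ∈ 𝒞 ∧ K' ∈ r K ∧ L' ∈ r L ∧ q = s(K', L')}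
      with hDdef
    have hmemC : ∀ {K L : Set V}, s(K, L) ∈ 𝒞 → K ∈ comps 𝒞 := by
      intro K L h
      exact ⟨s(K, L), h, Sym2.mem_mk_left _ _⟩
    have hDcover : G.IsSetJoinCover 𝒟 := by
      constructor
      · rintro q ⟨K, L, K', L', hKL, hK', hL', rfl⟩ A hA
        rw [Sym2.mem_iff] at hA
        have key : ∀ (M M' : Set V), M.Nonempty → M' ∈ r M → M'.Nonempty := by
          intro M M' hM hM'
          by_cases h : M ∈ S
          · rw [hrdef] at hM'; simp only [if_pos h, Set.mem_setOf_eq] at hM'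
            obtain ⟨x, _, rfl⟩ := hM'; exact ⟨x, rfl⟩
          · rw [hrdef] at hM'; simp only [if_neg h, Set.mem_singleton_iff] at hM'
            subst hM'; exact hM
        rcases hA with rfl | rfl
        · exact key K A (hne _ hKL K (Sym2.mem_mk_left _ _)) hK'
        · exact key L A (hne _ hKL L (Sym2.mem_mk_right _ _)) hL'
      · intro u v
        constructor
        · intro huv
          obtain ⟨p, hp, K, L, hpKL, huK, hvL⟩ := (hcov u v).1 huv
          subst hpKL
          obtain ⟨K', hK', huK'⟩ := pick K u huK
          obtain ⟨L', hL', hvL'⟩ := pick L v hvL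
          exact ⟨s(K', L'), ⟨K, L, K', L', hp, hK', hL', rfl⟩, K', L', rfl, huK', hvL'⟩
        · rintro ⟨q, ⟨K, L, K', L', hKL, hK', hL', rfl⟩, A, B, hAB, huA, hvB⟩
          rcases Sym2.eq_iff.mp hAB with ⟨rfl, rfl⟩ | ⟨rfl, rfl⟩
          · exact (hcov u v).2 ⟨s(K, L), hKL, K, L, rfl, hr_sub hK' huA, hr_sub hL' hvB⟩
          · refine (hcov u v).2 ⟨s(K, L), hKL, L, K, ?_, hr_sub hL' huA, hr_sub hK' hvB⟩
            rw [Sym2.eq_swap]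
    have hDcomps : comps 𝒟 ⊆ (comps 𝒞 \ S) ∪
        ((fun x => ({x} : Set V)) '' ↑(s.biUnion fun K => (K : Set V).toFinset)) := by
      rintro A ⟨q, ⟨K, L, K', L', hKL, hK', hL', rfl⟩, hAq⟩
      rw [Sym2.mem_iff] at hAq
      have key : ∀ M M' : Set V, M ∈ comps 𝒞 → M' ∈ r M → M' ∈ (comps 𝒞 \ S) ∪
          ((fun x => ({x} : Set V)) '' ↑(s.biUnion fun K => (K : Set V).toFinset)) := by
        intro M M' hM hM'
        by_cases h : M ∈ S
        · rw [hrdef] at hM'; simp only [if_pos h, Set.mem_setOf_eq] at hM'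
          obtain ⟨x, hx, rfl⟩ := hM'
          right
          refine ⟨x, ?_, rfl⟩
          obtain ⟨k, hk, rfl⟩ := h
          rw [Finset.mem_coe, Finset.mem_biUnion]
          exact ⟨k, hk, by simpa using hx⟩
        · rw [hrdef] at hM'; simp only [if_neg h, Set.mem_singleton_iff] at hM'
          subst hM'
          exact Or.inl ⟨hM, h⟩
      rcases hAq with rfl | rfl
      · exact key K A (hmemC hKL) hK'
      · exact key L A (hmemC (show s(L, K) ∈ 𝒞 by rwa [Sym2.eq_swap])) hL'
    have hfin : (comps 𝒞).Finite := Set.toFinite _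
    have h1 : coverOrder 𝒟 ≤ (comps 𝒞 \ S).ncard +
        ((fun x => ({x} : Set V)) '' ↑(s.biUnion fun K => (K : Set V).toFinset)).ncard := by
      refine le_trans (Set.ncard_le_ncard hDcomps ?_) (Set.ncard_union_le _ _)
      exact Set.toFinite _
    have h2 : ((fun x => ({x} : Set V)) ''
        ↑(s.biUnion fun K => (K : Set V).toFinset)).ncard ≤
        (s.biUnion fun K => (K : Set V).toFinset).card := by
      calc ((fun x => ({x} : Set V)) ''
          ↑(s.biUnion fun K => (K : Set V).toFinset)).ncard
          ≤ (↑(s.biUnion fun K => (K : Set V).toFinset) : Set V).ncard :=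
            Set.ncard_image_le (Set.toFinite _)
        _ = _ := Set.ncard_coe_finset _
    have hScard : S.ncard = s.card := by
      rw [hSdef, Set.ncard_image_of_injective _ Subtype.val_injective, Set.ncard_coe_finset]
    have h3 : (comps 𝒞 \ S).ncard = (comps 𝒞).ncard - s.card := by
      rw [Set.ncard_diff hSsub (Set.toFinite _), hScard]
    have h4 : s.card ≤ (comps 𝒞).ncard := by
      rw [← hScard]; exact Set.ncard_le_ncard hSsub hfin
    have hDin : G.st ≤ coverOrder 𝒟 := Nat.sInf_le ⟨𝒟, hDcover, rfl⟩
    have hordC : coverOrder 𝒞 = (comps 𝒞).ncard := rfl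
    omega
  obtain ⟨f, hinj, hmem⟩ :=
    (Finset.all_card_le_biUnion_card_iff_exists_injective
      (fun K : comps 𝒞 => (K : Set V).toFinset)).1 hall
  refine ⟨f, hinj, ?_⟩
  intro K L hKL
  exact (hcov _ _).2 ⟨s((K : Set V), (L : Set V)), hKL, K, L, rfl,
    by simpa using hmem K, by simpa using hmem L⟩

end LGraph
end

section
/- For every graph G, st_+(G) = st_+(F_tw(G)), where F_tw(G) is the largest twin-free subgraph of G (obtained by removing all but one vertex from every set of mutually twin vertices). Moreover, G has a unique optimal set-join cover if and only if F_tw(G) has a unique optimal set-join cover. -/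
open Matrix

namespace LGraph

variable {V W : Type*}

section TwinAux

open Function Set

variable {V W : Type*}

lemma comps_map_image (g : Set V → Set W) (𝒞 : Set (Sym2 (Set V))) :
    comps (Sym2.map g '' 𝒞) = g '' comps 𝒞 := by
  ext K
  constructor
  · rintro ⟨p, ⟨q, hq, rfl⟩, hK⟩
    obtain ⟨A, hA, rfl⟩ := Sym2.mem_map.mp hK
    exact ⟨A, ⟨q, hq, hA⟩, rfl⟩
  · rintro ⟨A, ⟨q, hq, hA⟩, rfl⟩
    exact ⟨Sym2.map g q, ⟨q, hq, rfl⟩, Sym2.mem_map.mpr ⟨A, hA, rfl⟩⟩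

variable {G : LGraph V} {H : LGraph W} {f : V → W}

lemma isCover_up (hf : Surjective f) (hadj : ∀ u v, G.Adj u v ↔ H.Adj (f u) (f v))
    {𝒟 : Set (Sym2 (Set W))} (h𝒟 : H.IsSetJoinCover 𝒟) :
    G.IsSetJoinCover (Sym2.map (fun D => f ⁻¹' D) '' 𝒟) := by
  constructor
  · rintro p ⟨q, hq, rfl⟩ K hK
    obtain ⟨D, hD, rfl⟩ := Sym2.mem_map.mp hK
    obtain ⟨d, hd⟩ := h𝒟.1 q hq D hD
    obtain ⟨v, rfl⟩ := hf d
    exact ⟨v, hd⟩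
  · intro u v
    rw [hadj u v, h𝒟.2 (f u) (f v)]
    constructor
    · rintro ⟨q, hq, D, E, rfl, hu, hv⟩
      exact ⟨Sym2.map (fun D => f ⁻¹' D) s(D, E), ⟨_, hq, rfl⟩, f ⁻¹' D, f ⁻¹' E,
        by rw [Sym2.map_pair_eq], hu, hv⟩
    · rintro ⟨p, ⟨q, hq, rfl⟩, K, L, hpe, hu, hv⟩
      induction q using Sym2.ind with
      | _ D E =>
        rw [Sym2.map_pair_eq] at hpe
        rcases Sym2.eq_iff.mp hpe with ⟨hK, hL⟩ | ⟨hK, hL⟩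
        · subst hK; subst hL
          exact ⟨s(D, E), hq, D, E, rfl, hu, hv⟩
        · subst hK; subst hL
          exact ⟨s(D, E), hq, E, D, Sym2.eq_swap, hu, hv⟩

lemma isCover_dn (hf : Surjective f) (hadj : ∀ u v, G.Adj u v ↔ H.Adj (f u) (f v))
    {𝒞 : Set (Sym2 (Set V))} (h𝒞 : G.IsSetJoinCover 𝒞) :
    H.IsSetJoinCover (Sym2.map (fun K => f '' K) '' 𝒞) := by
  constructor
  · rintro p ⟨q, hq, rfl⟩ D hD
    obtain ⟨K, hK, rfl⟩ := Sym2.mem_map.mp hD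
    exact (h𝒞.1 q hq K hK).image f
  · intro a b
    constructor
    · intro hab
      obtain ⟨u, rfl⟩ := hf a
      obtain ⟨v, rfl⟩ := hf b
      obtain ⟨p, hp, K, L, rfl, hu, hv⟩ := (h𝒞.2 u v).mp ((hadj u v).mpr hab)
      exact ⟨_, ⟨_, hp, rfl⟩, f '' K, f '' L, Sym2.map_pair_eq _ _ _,
        ⟨u, hu, rfl⟩, ⟨v, hv, rfl⟩⟩
    · rintro ⟨p, ⟨q, hq, rfl⟩, D, E, hpe, ha, hb⟩
      induction q using Sym2.ind with
      | _ K L =>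
        rw [Sym2.map_pair_eq] at hpe
        have hKL : ∀ u ∈ K, ∀ v ∈ L, G.Adj u v := fun u hu v hv =>
          (h𝒞.2 u v).mpr ⟨s(K, L), hq, K, L, rfl, hu, hv⟩
        rcases Sym2.eq_iff.mp hpe with ⟨h1, h2⟩ | ⟨h1, h2⟩
        · subst h1; subst h2
          obtain ⟨u, hu, rfl⟩ := ha; obtain ⟨v, hv, rfl⟩ := hb
          exact (hadj u v).mp (hKL u hu v hv)
        · subst h1; subst h2
          obtain ⟨v, hv, rfl⟩ := ha; obtain ⟨u, hu, rfl⟩ := hb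
          exact H.symm ((hadj u v).mp (hKL u hu v hv))

lemma coverOrder_up (hf : Surjective f) (𝒟 : Set (Sym2 (Set W))) :
    coverOrder (Sym2.map (fun D => f ⁻¹' D) '' 𝒟) = coverOrder 𝒟 := by
  unfold coverOrder
  rw [comps_map_image]
  exact Set.ncard_image_of_injective _ hf.preimage_injective

lemma coverOrder_dn [Finite V] (f : V → W) (𝒞 : Set (Sym2 (Set V))) :
    coverOrder (Sym2.map (fun K => f '' K) '' 𝒞) ≤ coverOrder 𝒞 := by
  unfold coverOrder
  rw [comps_map_image]
  exact Set.ncard_image_le (Set.toFinite _)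

lemma exists_cover (G : LGraph V) : ∃ 𝒞, G.IsSetJoinCover 𝒞 := by
  refine ⟨{q | ∃ u v, G.Adj u v ∧ q = s(({u} : Set V), ({v} : Set V))}, ?_, ?_⟩
  · rintro p ⟨u, v, huv, rfl⟩ K hK
    rcases Sym2.mem_iff.mp hK with rfl | rfl
    · exact ⟨u, rfl⟩
    · exact ⟨v, rfl⟩
  · intro a b
    constructor
    · intro h
      exact ⟨s(({a} : Set V), ({b} : Set V)), ⟨a, b, h, rfl⟩, {a}, {b}, rfl, rfl, rfl⟩
    · rintro ⟨p, ⟨u, v, huv, rfl⟩, K, L, hpe, ha, hb⟩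
      rcases Sym2.eq_iff.mp hpe.symm with ⟨h1, h2⟩ | ⟨h1, h2⟩
      · subst h1; subst h2
        obtain rfl : a = u := ha
        obtain rfl : b = v := hb
        exact huv
      · subst h1; subst h2
        obtain rfl : a = v := ha
        obtain rfl : b = u := hb
        exact G.symm huv

lemma st_spec [Finite V] (G : LGraph V) :
    ∃ 𝒞, G.IsSetJoinCover 𝒞 ∧ coverOrder 𝒞 = G.st := by
  have hne : {k : ℕ | ∃ 𝒞 : Set (Sym2 (Set V)),
      G.IsSetJoinCover 𝒞 ∧ coverOrder 𝒞 = k}.Nonempty := by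
    obtain ⟨𝒞, h⟩ := exists_cover G
    exact ⟨coverOrder 𝒞, 𝒞, h, rfl⟩
  exact Nat.sInf_mem hne

lemma st_le {𝒞 : Set (Sym2 (Set V))} (h : G.IsSetJoinCover 𝒞) :
    G.st ≤ coverOrder 𝒞 :=
  Nat.sInf_le ⟨𝒞, h, rfl⟩

theorem st_quotient {V W : Type*} [Finite V] [Finite W] (G : LGraph V) (H : LGraph W)
    (f : V → W) (hf : Function.Surjective f)
    (hadj : ∀ u v, G.Adj u v ↔ H.Adj (f u) (f v)) :
    G.st = H.st ∧ (HasUniqueOptimalCover G ↔ HasUniqueOptimalCover H) := by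
  classical
  have hGH : G.st ≤ H.st := by
    obtain ⟨𝒟, h𝒟, hord⟩ := st_spec H
    calc G.st ≤ coverOrder (Sym2.map (fun D => f ⁻¹' D) '' 𝒟) :=
          st_le (isCover_up hf hadj h𝒟)
      _ = coverOrder 𝒟 := coverOrder_up hf 𝒟
      _ = H.st := hord
  have hHG : H.st ≤ G.st := by
    obtain ⟨𝒞, h𝒞, hord⟩ := st_spec G
    calc H.st ≤ coverOrder (Sym2.map (fun K => f '' K) '' 𝒞) :=
          st_le (isCover_dn hf hadj h𝒞)
      _ ≤ coverOrder 𝒞 := coverOrder_dn f 𝒞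
      _ = G.st := hord
  have hst : G.st = H.st := le_antisymm hGH hHG
  refine ⟨hst, ?_, ?_⟩
  · -- G unique → H unique
    rintro ⟨𝒞s, ⟨h𝒞s, hord𝒞s⟩, huniq⟩
    set 𝒟₀ := Sym2.map (fun K => f '' K) '' 𝒞s with h𝒟₀def
    have h𝒟₀ : H.IsSetJoinCover 𝒟₀ := isCover_dn hf hadj h𝒞s
    have hup : G.IsSetJoinCover (Sym2.map (fun D => f ⁻¹' D) '' 𝒟₀) :=
      isCover_up hf hadj h𝒟₀
    have h1 : coverOrder (Sym2.map (fun D => f ⁻¹' D) '' 𝒟₀) = coverOrder 𝒟₀ :=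
      coverOrder_up hf 𝒟₀
    have h2 : coverOrder 𝒟₀ ≤ G.st := hord𝒞s ▸ coverOrder_dn f 𝒞s
    have h3 : G.st ≤ coverOrder 𝒟₀ := h1 ▸ st_le hup
    have hord𝒟₀ : coverOrder 𝒟₀ = H.st := by omega
    have hinj : Function.Injective
        (fun 𝒟 : Set (Sym2 (Set W)) => Sym2.map (fun D => f ⁻¹' D) '' 𝒟) :=
      Set.image_injective.mpr (Sym2.map.injective hf.preimage_injective)
    refine ⟨𝒟₀, ⟨h𝒟₀, hord𝒟₀⟩, ?_⟩
    rintro 𝒟 ⟨h𝒟, hord𝒟⟩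
    have e1 : Sym2.map (fun D => f ⁻¹' D) '' 𝒟 = 𝒞s :=
      huniq _ ⟨isCover_up hf hadj h𝒟, by rw [coverOrder_up hf, hord𝒟, ← hst]⟩
    have e0 : Sym2.map (fun D => f ⁻¹' D) '' 𝒟₀ = 𝒞s :=
      huniq _ ⟨hup, by rw [h1, hord𝒟₀, ← hst]⟩
    exact hinj (e1.trans e0.symm)
  · -- H unique → G unique
    rintro ⟨𝒟s, ⟨h𝒟s, hord𝒟s⟩, huniq⟩
    refine ⟨Sym2.map (fun D => f ⁻¹' D) '' 𝒟s,
      ⟨isCover_up hf hadj h𝒟s, by rw [coverOrder_up hf, hord𝒟s, hst]⟩, ?_⟩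
    rintro 𝒞 ⟨h𝒞, hord𝒞⟩
    set 𝒟 := Sym2.map (fun K => f '' K) '' 𝒞 with h𝒟def
    have h𝒟 : H.IsSetJoinCover 𝒟 := isCover_dn hf hadj h𝒞
    have hord𝒟 : coverOrder 𝒟 = H.st := by
      have h1 : coverOrder 𝒟 ≤ coverOrder 𝒞 := coverOrder_dn f 𝒞
      have h2 : H.st ≤ coverOrder 𝒟 := st_le h𝒟
      omega
    have h𝒟eq : 𝒟 = 𝒟s := huniq 𝒟 ⟨h𝒟, hord𝒟⟩
    -- injectivity of K ↦ f '' K on the components of 𝒞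
    have hinjOn : Set.InjOn (fun K => f '' K) (comps 𝒞) := by
      apply Set.injOn_of_ncard_image_eq _ (Set.toFinite _)
      have h1 : (fun K => f '' K) '' comps 𝒞 = comps 𝒟 := (comps_map_image _ 𝒞).symm
      rw [h1]
      show coverOrder 𝒟 = coverOrder 𝒞
      omega
    -- every component of 𝒞 is saturated
    have hsat : ∀ K ∈ comps 𝒞, f ⁻¹' (f '' K) ⊆ K := by
      intro K hK v' hv'
      by_contra hv'K
      have hxD : f v' ∈ f '' K := hv'
      have hDcomp : f '' K ∈ comps 𝒟 := by
        rw [h𝒟def, comps_map_image]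
        exact ⟨K, hK, rfl⟩
      -- every edge at f v' is covered by a pair whose first component is not f '' K
      have claim : ∀ e, H.Adj (f v') e → ∃ D' E', s(D', E') ∈ 𝒟 ∧ f v' ∈ D' ∧ e ∈ E' ∧
          D' ≠ f '' K ∧ (e = f v' → E' ≠ f '' K) := by
        intro e he
        obtain ⟨u, hu, hux⟩ : ∃ u, f u = e ∧ (e = f v' → u = v') := by
          rcases eq_or_ne e (f v') with rfl | hne
          · exact ⟨v', rfl, fun _ => rfl⟩
          · obtain ⟨u, rfl⟩ := hf e
            exact ⟨u, rfl, fun h => absurd h hne⟩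
        have hG : G.Adj v' u := (hadj v' u).mpr (by rw [hu]; exact he)
        obtain ⟨p, hp, K', L', rfl, hv'K', huL'⟩ := (h𝒞.2 v' u).mp hG
        have hK'c : K' ∈ comps 𝒞 := ⟨_, hp, Sym2.mem_iff.mpr (Or.inl rfl)⟩
        have hL'c : L' ∈ comps 𝒞 := ⟨_, hp, Sym2.mem_iff.mpr (Or.inr rfl)⟩
        refine ⟨f '' K', f '' L', ?_, ⟨v', hv'K', rfl⟩, ⟨u, huL', hu⟩, ?_, ?_⟩
        · exact ⟨s(K', L'), hp, Sym2.map_pair_eq _ _ _⟩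
        · intro hDD
          exact hv'K (hinjOn hK'c hK hDD ▸ hv'K')
        · intro hex hED
          have huv : u = v' := hux hex
          have hLK : L' = K := hinjOn hL'c hK hED
          exact hv'K (hLK ▸ (huv ▸ huL'))
      by_cases hDx : f '' K = {f v'}
      · -- drop all pairs containing f '' K
        have h𝒟'cov : H.IsSetJoinCover {q ∈ 𝒟 | f '' K ∉ q} := by
          constructor
          · intro p hp; exact h𝒟.1 p hp.1
          · intro a b
            constructor
            · intro hab
              obtain ⟨q, hq, A, B, rfl, ha, hb⟩ := (h𝒟.2 a b).mp hab
              by_cases hDq : f '' K ∉ s(A, B)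
              · exact ⟨_, ⟨hq, hDq⟩, A, B, rfl, ha, hb⟩
              · rw [not_not] at hDq
                rcases Sym2.mem_iff.mp hDq with rfl | rfl
                · have hax : a = f v' := by rw [hDx] at ha; exact ha
                  subst hax
                  obtain ⟨D', E', hmem, hxD', hbE', hD'D, hloop⟩ := claim b hab
                  refine ⟨s(D', E'), ⟨hmem, ?_⟩, D', E', rfl, hxD', hbE'⟩
                  intro hmem2
                  rcases Sym2.mem_iff.mp hmem2 with h | h
                  · exact hD'D h.symm
                  · have hbx : b = f v' := by rw [← h, hDx] at hbE'; exact hbE'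
                    exact hloop hbx h.symm
                · have hbx : b = f v' := by rw [hDx] at hb; exact hb
                  subst hbx
                  obtain ⟨D', E', hmem, hxD', haE', hD'D, hloop⟩ := claim a (H.symm hab)
                  refine ⟨s(D', E'), ⟨hmem, ?_⟩, E', D', Sym2.eq_swap, haE', hxD'⟩
                  intro hmem2
                  rcases Sym2.mem_iff.mp hmem2 with h | h
                  · exact hD'D h.symm
                  · have hax : a = f v' := by rw [← h, hDx] at haE'; exact haE'
                    exact hloop hax h.symm
            · rintro ⟨q, ⟨hq, _⟩, A, B, rfl, ha, hb⟩
              exact (h𝒟.2 a b).mpr ⟨_, hq, A, B, rfl, ha, hb⟩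
        have hsub : comps {q ∈ 𝒟 | f '' K ∉ q} ⊆ comps 𝒟 \ {f '' K} := by
          rintro C ⟨q, ⟨hq, hDq⟩, hC⟩
          exact ⟨⟨q, hq, hC⟩, fun h => hDq (h ▸ hC)⟩
        have h1 : coverOrder {q ∈ 𝒟 | f '' K ∉ q} ≤ (comps 𝒟 \ {f '' K}).ncard :=
          Set.ncard_le_ncard hsub (Set.toFinite _)
        have h2 : (comps 𝒟 \ {f '' K}).ncard < (comps 𝒟).ncard :=
          Set.ncard_diff_singleton_lt_of_mem hDcomp (Set.toFinite _)
        have h3 : H.st ≤ coverOrder {q ∈ 𝒟 | f '' K ∉ q} := st_le h𝒟'cov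
        have h4 : (comps 𝒟).ncard = H.st := hord𝒟
        omega
      · -- shrink the component f '' K by removing f v'
        have hDne : (f '' K \ {f v'}).Nonempty := by
          rw [Set.nonempty_iff_ne_empty]
          intro h
          apply hDx
          apply Set.eq_singleton_iff_unique_mem.mpr
          refine ⟨hxD, fun y hy => ?_⟩
          by_contra hyx
          have : y ∈ f '' K \ {f v'} := ⟨hy, hyx⟩
          rw [h] at this
          exact this
        set g : Set W → Set W := fun C => if C = f '' K then f '' K \ {f v'} else C with hg
        have hgsub : ∀ C, g C ⊆ C := by
          intro C
          simp only [hg]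
          split_ifs with h
          · rw [h]; exact Set.diff_subset
          · exact subset_rfl
        have hgmem : ∀ (c : W) (C : Set W), c ∈ C → c ≠ f v' → c ∈ g C := by
          intro c C hc hcx
          simp only [hg]
          split_ifs with h
          · exact ⟨h ▸ hc, hcx⟩
          · exact hc
        have hgmem2 : ∀ (c : W) (C : Set W), c ∈ C → C ≠ f '' K → c ∈ g C := by
          intro c C hc hCD
          simp only [hg]
          rw [if_neg hCD]
          exact hc
        have h𝒟'cov : H.IsSetJoinCover (Sym2.map g '' 𝒟) := by
          constructor
          · rintro p ⟨q, hq, rfl⟩ C hC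
            obtain ⟨A, hA, rfl⟩ := Sym2.mem_map.mp hC
            by_cases h : A = f '' K
            · simp only [hg]
              rw [if_pos h]
              exact hDne
            · simp only [hg]
              rw [if_neg h]
              exact h𝒟.1 q hq A hA
          · intro a b
            constructor
            · intro hab
              obtain ⟨q, hq, A, B, rfl, ha, hb⟩ := (h𝒟.2 a b).mp hab
              by_cases hagA : a ∈ g A
              · by_cases hbgB : b ∈ g B
                · exact ⟨Sym2.map g s(A, B), ⟨_, hq, rfl⟩, g A, g B,
                    by rw [Sym2.map_pair_eq], hagA, hbgB⟩
                · have hbx : b = f v' := by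
                    by_contra h
                    exact hbgB (hgmem b B hb h)
                  subst hbx
                  obtain ⟨D', E', hmem, hxD', haE', hD'D, hloop⟩ := claim a (H.symm hab)
                  refine ⟨Sym2.map g s(D', E'), ⟨_, hmem, rfl⟩, g E', g D',
                    by rw [Sym2.map_pair_eq]; exact Sym2.eq_swap, ?_,
                    hgmem2 _ D' hxD' hD'D⟩
                  by_cases hE'D : E' = f '' K
                  · exact hgmem a E' haE' (fun h => hloop h hE'D)
                  · exact hgmem2 a E' haE' hE'D
              · have hax : a = f v' := by
                  by_contra h
                  exact hagA (hgmem a A ha h)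
                subst hax
                obtain ⟨D', E', hmem, hxD', hbE', hD'D, hloop⟩ := claim b hab
                refine ⟨Sym2.map g s(D', E'), ⟨_, hmem, rfl⟩, g D', g E',
                  by rw [Sym2.map_pair_eq], hgmem2 _ D' hxD' hD'D, ?_⟩
                by_cases hE'D : E' = f '' K
                · exact hgmem b E' hbE' (fun h => hloop h hE'D)
                · exact hgmem2 b E' hbE' hE'D
            · rintro ⟨p, ⟨q, hq, rfl⟩, A, B, hpe, ha, hb⟩
              induction q using Sym2.ind with
              | _ C₁ C₂ =>
                rw [Sym2.map_pair_eq] at hpe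
                have hadj12 : ∀ c ∈ C₁, ∀ d ∈ C₂, H.Adj c d := fun c hc d hd =>
                  (h𝒟.2 c d).mpr ⟨s(C₁, C₂), hq, C₁, C₂, rfl, hc, hd⟩
                rcases Sym2.eq_iff.mp hpe with ⟨h1, h2⟩ | ⟨h1, h2⟩
                · exact hadj12 a (hgsub C₁ (by rw [h1]; exact ha))
                    b (hgsub C₂ (by rw [h2]; exact hb))
                · exact H.symm (hadj12 b (hgsub C₁ (by rw [h1]; exact hb))
                    a (hgsub C₂ (by rw [h2]; exact ha)))
        have hord𝒟' : coverOrder (Sym2.map g '' 𝒟) = H.st := by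
          have hle : coverOrder (Sym2.map g '' 𝒟) ≤ coverOrder 𝒟 := by
            unfold coverOrder
            rw [comps_map_image]
            exact Set.ncard_image_le (Set.toFinite _)
          have h2 : H.st ≤ coverOrder (Sym2.map g '' 𝒟) := st_le h𝒟'cov
          omega
        have heq : Sym2.map g '' 𝒟 = 𝒟 := (huniq _ ⟨h𝒟'cov, hord𝒟'⟩).trans h𝒟eq.symm
        have hDin : f '' K ∈ g '' comps 𝒟 := by
          rw [← comps_map_image, heq]
          exact hDcomp
        obtain ⟨C, hC, hgC⟩ := hDin
        by_cases h : C = f '' K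
        · simp only [hg] at hgC
          rw [if_pos h] at hgC
          have : f v' ∈ f '' K \ {f v'} := hgC.symm ▸ hxD
          exact this.2 rfl
        · simp only [hg] at hgC
          rw [if_neg h] at hgC
          exact h hgC
    -- conclude: 𝒞 is the blow-up of 𝒟
    have hfix : ∀ p ∈ 𝒞, Sym2.map (fun D => f ⁻¹' D) (Sym2.map (fun K => f '' K) p) = p := by
      intro p hp
      induction p using Sym2.ind with
      | _ K L =>
        have hK : K ∈ comps 𝒞 := ⟨s(K, L), hp, Sym2.mem_iff.mpr (Or.inl rfl)⟩
        have hL : L ∈ comps 𝒞 := ⟨s(K, L), hp, Sym2.mem_iff.mpr (Or.inr rfl)⟩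
        rw [Sym2.map_pair_eq, Sym2.map_pair_eq,
          show f ⁻¹' (f '' K) = K from subset_antisymm (hsat K hK) (Set.subset_preimage_image f K),
          show f ⁻¹' (f '' L) = L from subset_antisymm (hsat L hL) (Set.subset_preimage_image f L)]
    have : Sym2.map (fun D => f ⁻¹' D) '' 𝒟 = 𝒞 := by
      rw [h𝒟def, Set.image_image]
      calc (fun p => Sym2.map (fun D => f ⁻¹' D) (Sym2.map (fun K => f '' K) p)) '' 𝒞
          = (fun p => p) '' 𝒞 := Set.image_congr hfix
        _ = 𝒞 := Set.image_id 𝒞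
    rw [← this, h𝒟eq]

end TwinAux

/-- For every graph `G`, `st₊(G) = st₊(F_tw(G))`, where `F_tw(G)` is the
largest twin-free subgraph of `G` — formalized as the induced subgraph on any set `S` of
vertices containing exactly one representative from every class of mutually twin vertices.
Moreover, `G` has a unique optimal set-join cover iff `F_tw(G)` does. -/
theorem st_twinFree {V : Type*} [Fintype V] (G : LGraph V) (S : Set V)
    (hrep : ∀ v : V, ∃ w ∈ S, G.neighborSet v = G.neighborSet w)
    (hdistinct : ∀ w ∈ S, ∀ w' ∈ S, G.neighborSet w = G.neighborSet w' → w = w') :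
    G.st = (G.induce S).st ∧
      (HasUniqueOptimalCover G ↔ HasUniqueOptimalCover (G.induce S)) := by
  classical
  let r : V → V := fun v => (hrep v).choose
  have hrS : ∀ v, r v ∈ S := fun v => (hrep v).choose_spec.1
  have hN : ∀ v, G.neighborSet v = G.neighborSet (r v) := fun v => (hrep v).choose_spec.2
  let ρ : V → S := fun v => ⟨r v, hrS v⟩
  have hρsurj : Function.Surjective ρ := by
    intro w
    refine ⟨(w : V), Subtype.ext ?_⟩
    exact hdistinct _ (hrS _) _ w.2 (hN (w : V)).symm
  have key1 : ∀ u v, G.Adj u v ↔ G.Adj (r u) v := fun u v => Set.ext_iff.mp (hN u) v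
  have hadj : ∀ u v, G.Adj u v ↔ (G.induce S).Adj (ρ u) (ρ v) := by
    intro u v
    show G.Adj u v ↔ G.Adj (r u) (r v)
    rw [key1 u v]
    constructor
    · intro h; exact G.symm ((key1 v (r u)).mp (G.symm h))
    · intro h; exact G.symm ((key1 v (r u)).mpr (G.symm h))
  exact st_quotient G (G.induce S) ρ hρsurj hadj

end LGraph
end

section
/- If 𝒞 is an optimal set-join cover of a graph G, then the graph G(𝒞) of the cover is twin-free: no two distinct vertices of G(𝒞) have the same neighbourhood in G(𝒞). -/
open Matrix

namespace LGraph

variable {V W : Type*}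

/-- If `𝒞` is an optimal set-join cover of a graph `G`, then the cover
graph `G(𝒞)` is twin-free: no two distinct vertices of `G(𝒞)` have the same
neighbourhood in `G(𝒞)`. -/
theorem coverGraph_twinFree_of_optimal {V : Type*} [Fintype V] (G : LGraph V)
    (𝒞 : Set (Sym2 (Set V))) (hopt : G.IsOptimalCover 𝒞) :
    TwinFree (coverGraph 𝒞) := by
  intro K L hN
  by_contra hKL
  have hKL' : (K : Set V) ≠ (L : Set V) := fun h => hKL (Subtype.ext h)
  -- twin property: s(K, M) ∈ 𝒞 ↔ s(L, M) ∈ 𝒞 for all M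
  have htwin : ∀ M : Set V, (s((K : Set V), M) ∈ 𝒞 ↔ s((L : Set V), M) ∈ 𝒞) := by
    intro M
    constructor
    · intro h
      have hM : M ∈ comps 𝒞 := ⟨_, h, Sym2.mem_mk_right _ _⟩
      have : (⟨M, hM⟩ : comps 𝒞) ∈ neighborSet (coverGraph 𝒞) K := h
      rw [hN] at this
      exact this
    · intro h
      have hM : M ∈ comps 𝒞 := ⟨_, h, Sym2.mem_mk_right _ _⟩
      have : (⟨M, hM⟩ : comps 𝒞) ∈ neighborSet (coverGraph 𝒞) L := h
      rw [← hN] at this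
      exact this
  have htwin' : ∀ A M : Set V, (A = (K : Set V) ∨ A = (L : Set V)) →
      s(A, M) ∈ 𝒞 → s((K : Set V), M) ∈ 𝒞 ∧ s((L : Set V), M) ∈ 𝒞 := by
    rintro A M (rfl | rfl) h
    · exact ⟨h, (htwin M).mp h⟩
    · exact ⟨(htwin M).mpr h, h⟩
  classical
  set f : Set V → Set V :=
    fun M => if M = (K : Set V) ∨ M = (L : Set V) then (K : Set V) ∪ (L : Set V) else M with hf
  have hsub : ∀ M : Set V, M ⊆ f M := by
    intro M
    by_cases h : M = (K : Set V) ∨ M = (L : Set V)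
    · simp only [hf, if_pos h]
      rcases h with rfl | rfl
      · exact Set.subset_union_left
      · exact Set.subset_union_right
    · simp [hf, if_neg h]
  set 𝒟 : Set (Sym2 (Set V)) := Sym2.map f '' 𝒞 with h𝒟
  obtain ⟨⟨hne, hcov⟩, hord⟩ := hopt
  -- key step: replace a component by pieces
  have hstep : ∀ A B : Set V, s(A, B) ∈ 𝒞 → ∀ u : V, u ∈ f A →
      ∃ A' : Set V, u ∈ A' ∧ s(A', B) ∈ 𝒞 := by
    intro A B hAB u hu
    by_cases h : A = (K : Set V) ∨ A = (L : Set V)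
    · rw [hf] at hu
      simp only [if_pos h] at hu
      obtain ⟨hK, hL⟩ := htwin' A B h hAB
      rcases hu with hu | hu
      · exact ⟨(K : Set V), hu, hK⟩
      · exact ⟨(L : Set V), hu, hL⟩
    · rw [hf] at hu
      simp only [if_neg h] at hu
      exact ⟨A, hu, hAB⟩
  -- 𝒟 is a set-join cover
  have hcov𝒟 : G.IsSetJoinCover 𝒟 := by
    constructor
    · rintro p ⟨q, hq, rfl⟩ M hM
      rw [Sym2.mem_map] at hM
      obtain ⟨M₀, hM₀, rfl⟩ := hM
      exact (hne q hq M₀ hM₀).mono (hsub M₀)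
    · intro u v
      constructor
      · intro huv
        obtain ⟨p, hp, A, B, rfl, hu, hv⟩ := (hcov u v).mp huv
        exact ⟨Sym2.map f s(A, B), ⟨_, hp, rfl⟩, f A, f B, by simp [Sym2.map_pair_eq],
          hsub A hu, hsub B hv⟩
      · rintro ⟨p, ⟨q, hq, rfl⟩, A, B, hpq, hu, hv⟩
        induction q using Sym2.inductionOn with
        | hf A₀ B₀ =>
          rw [Sym2.map_pair_eq, Sym2.eq_iff] at hpq
          have key : ∀ A₀ B₀ : Set V, s(A₀, B₀) ∈ 𝒞 → u ∈ f A₀ → v ∈ f B₀ → G.Adj u v := by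
            intro A₀ B₀ hq hu hv
            obtain ⟨A', hu', hA'⟩ := hstep A₀ B₀ hq u hu
            have hBA' : s(B₀, A') ∈ 𝒞 := by rwa [Sym2.eq_swap] at hA'
            obtain ⟨B', hv', hB'⟩ := hstep B₀ A' hBA' v hv
            have : s(A', B') ∈ 𝒞 := by rwa [Sym2.eq_swap] at hB'
            exact (hcov u v).mpr ⟨s(A', B'), this, A', B', rfl, hu', hv'⟩
          rcases hpq with ⟨hA, hB⟩ | ⟨hA, hB⟩
          · exact key A₀ B₀ hq (hA ▸ hu) (hB ▸ hv)
          · have hq' : s(B₀, A₀) ∈ 𝒞 := by rwa [Sym2.eq_swap] at hq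
            exact key B₀ A₀ hq' (hB ▸ hu) (hA ▸ hv)
  -- comps 𝒟 is small
  have hcomps : comps 𝒟 ⊆
      insert ((K : Set V) ∪ (L : Set V)) (comps 𝒞 \ {(K : Set V), (L : Set V)}) := by
    rintro M ⟨p, ⟨q, hq, rfl⟩, hM⟩
    rw [Sym2.mem_map] at hM
    obtain ⟨M₀, hM₀, rfl⟩ := hM
    by_cases h : M₀ = (K : Set V) ∨ M₀ = (L : Set V)
    · left; simp [hf, if_pos h]
    · right
      push_neg at h
      have hfM : f M₀ = M₀ := if_neg (not_or.mpr h)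
      rw [hfM]
      exact ⟨⟨q, hq, hM₀⟩, by simp [h.1, h.2]⟩
  have hKmem : (K : Set V) ∈ comps 𝒞 := K.2
  have hLmem : (L : Set V) ∈ comps 𝒞 := L.2
  have hfin : (comps 𝒞).Finite := Set.toFinite _
  have hpair : ({(K : Set V), (L : Set V)} : Set (Set V)) ⊆ comps 𝒞 := by
    rintro x (rfl | rfl) <;> assumption
  have hpair2 : ({(K : Set V), (L : Set V)} : Set (Set V)).ncard = 2 :=
    Set.ncard_pair hKL'
  have hdiff : (comps 𝒞 \ {(K : Set V), (L : Set V)}).ncard = (comps 𝒞).ncard - 2 := by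
    rw [Set.ncard_diff hpair, hpair2]
  have h2le : 2 ≤ (comps 𝒞).ncard := by
    rw [← hpair2]
    exact Set.ncard_le_ncard hpair hfin
  have hlt : coverOrder 𝒟 < coverOrder 𝒞 := by
    unfold coverOrder
    calc (comps 𝒟).ncard
        ≤ (insert ((K : Set V) ∪ (L : Set V))
            (comps 𝒞 \ {(K : Set V), (L : Set V)})).ncard :=
          Set.ncard_le_ncard hcomps ((hfin.diff).insert _)
      _ ≤ (comps 𝒞 \ {(K : Set V), (L : Set V)}).ncard + 1 :=
          Set.ncard_insert_le _ _
      _ = (comps 𝒞).ncard - 2 + 1 := by rw [hdiff]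
      _ < (comps 𝒞).ncard := by omega
  have hle : G.st ≤ coverOrder 𝒟 := Nat.sInf_le ⟨𝒟, hcov𝒟, rfl⟩
  rw [hord] at hlt
  omega

end LGraph
end

section
/- Let T be a forest (a simple graph without loops and without cycles) and let A be any symmetric entrywise-nonnegative matrix whose pattern graph is T. Then rank(A) = st_+(A) = 2·starc(T), where starc(T) is the edge star cover number of T. In particular, st_+(T) = 2·starc(T). -/
open Matrix

namespace LGraph

variable {V W : Type*}

/-! ### Auxiliary material for Statement 10 -/

section Statement10Aux

open SimpleGraph Submodule

variable [Fintype V] [DecidableEq V]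

/-- Any finite acyclic simple graph with an edge has a loopless leaf. -/
lemma exists_leaf' (T : SimpleGraph V) (hT : T.IsAcyclic)
    (hE : ∃ x y, T.Adj x y) : ∃ v w, T.Adj v w ∧ ∀ x, T.Adj v x → x = w := by
  classical
  obtain ⟨x₀, y₀, hxy⟩ := hE
  set b := Fintype.card V with hb
  set P : ℕ → Prop := fun n => ∃ (u v : V) (p : T.Walk u v), p.IsPath ∧ p.length = n with hP
  have hP1 : P 1 := by
    refine ⟨x₀, y₀, Walk.cons hxy Walk.nil, ?_, rfl⟩
    simp [Walk.cons_isPath_iff, hxy.ne]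
  have hbound : ∀ n, P n → n ≤ b := by
    rintro n ⟨u, v, p, hp, rfl⟩
    exact hp.length_lt.le
  set n₀ := Nat.findGreatest P b with hn₀
  have hPn₀ : P n₀ := Nat.findGreatest_spec (hbound 1 hP1) hP1
  have h1n₀ : 1 ≤ n₀ := Nat.le_findGreatest (hbound 1 hP1) hP1
  have hmax : ∀ n, P n → n ≤ n₀ := fun n hn => Nat.le_findGreatest (hbound n hn) hn
  obtain ⟨u, v, p, hp, hlen⟩ := hPn₀
  set q := p.reverse with hq
  have hqpath : q.IsPath := hp.reverse
  have hqlen : q.length = n₀ := by simp [hq, hlen]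
  cases hq2 : q with
  | nil => rw [hq2] at hqlen; simp at hqlen; omega
  | @cons _ y _ h q' =>
    have hqp' : q'.IsPath ∧ v ∉ q'.support := by
      have := hqpath
      rw [hq2, Walk.cons_isPath_iff] at this
      exact this
    refine ⟨v, y, h, ?_⟩
    intro x hvx
    by_contra hxy'
    have hxv : x ≠ v := fun hh => T.irrefl (hh ▸ hvx)
    by_cases hxs : x ∈ q.support
    · have hx' : s(v, x) ∉ q.edges := by
        intro hmem
        rw [hq2] at hmem
        simp only [Walk.edges_cons, List.mem_cons] at hmem
        rcases hmem with hmem | hmem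
        · rw [Sym2.eq_iff] at hmem
          rcases hmem with ⟨_, h2⟩ | ⟨h1, h2⟩
          · exact hxy' h2
          · exact hxv h2
        · exact hqp'.2 (Walk.fst_mem_support_of_mem_edges q' hmem)
      have hr : ((q.takeUntil x hxs).reverse).IsPath := (hqpath.takeUntil hxs).reverse
      have hcyc : (Walk.cons hvx ((q.takeUntil x hxs).reverse)).IsCycle := by
        rw [Walk.cons_isCycle_iff]
        refine ⟨hr, ?_⟩
        intro hmem
        rw [Walk.edges_reverse, List.mem_reverse] at hmem
        exact hx' (Walk.edges_takeUntil_subset q hxs hmem)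
      exact hT _ hcyc
    · have hext : P (n₀ + 1) := by
        refine ⟨x, u, Walk.cons (T.adj_symm hvx) q, ?_, by simp [hqlen]⟩
        rw [Walk.cons_isPath_iff]
        exact ⟨hqpath, hxs⟩
      have := hmax _ hext
      omega

/-- The set of achievable star cover sizes. -/
def SC (G : SimpleGraph V) : Set ℕ :=
  {k : ℕ | ∃ f : Fin k → V × Set V,
    (∀ i, (f i).2.Nonempty ∧ (f i).1 ∉ (f i).2) ∧
    ∀ u v : V, G.Adj u v ↔
      ∃ i, (u = (f i).1 ∧ v ∈ (f i).2) ∨ (v = (f i).1 ∧ u ∈ (f i).2)}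

lemma starCoverNumber_eq' (G : SimpleGraph V) : starCoverNumber G = sInf (SC G) := rfl

/-- Delete all edges at `w`. -/
def delV (T : SimpleGraph V) (w : V) : SimpleGraph V where
  Adj u v := T.Adj u v ∧ u ≠ w ∧ v ≠ w
  symm := ⟨fun u v h => ⟨h.1.symm, h.2.2, h.2.1⟩⟩
  loopless := ⟨fun u h => T.irrefl h.1⟩

lemma SC_nonempty (T : SimpleGraph V) : (SC T).Nonempty := by
  classical
  set D : Finset V := Finset.univ.filter (fun x => ∃ y, T.Adj x y) with hD
  refine ⟨D.card, fun i => ((D.equivFin.symm i : V), {y | T.Adj (D.equivFin.symm i : V) y}), ?_, ?_⟩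
  · intro i
    have hmem : (D.equivFin.symm i : V) ∈ D := (D.equivFin.symm i).2
    have hmem2 := Finset.mem_filter.mp hmem
    exact ⟨hmem2.2, T.irrefl⟩
  · intro u v
    constructor
    · intro huv
      have hu : u ∈ D := by rw [hD, Finset.mem_filter]; exact ⟨Finset.mem_univ u, v, huv⟩
      refine ⟨D.equivFin ⟨u, hu⟩, Or.inl ⟨?_, ?_⟩⟩
      · simp
      · simpa using huv
    · rintro ⟨i, ⟨rfl, hv⟩ | ⟨rfl, hu⟩⟩
      · exact hv
      · exact (Set.mem_setOf_eq ▸ hu).symm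

lemma starc_mem (T : SimpleGraph V) : starCoverNumber T ∈ SC T :=
  Nat.sInf_mem (SC_nonempty T)

lemma starc_step (T : SimpleGraph V) (v w : V) (hvw : T.Adj v w)
    (hleaf : ∀ x, T.Adj v x → x = w) :
    starCoverNumber T = starCoverNumber (delV T w) + 1 := by
  classical
  apply le_antisymm
  · obtain ⟨f', hval', hcov'⟩ := starc_mem (delV T w)
    rw [starCoverNumber_eq' T]
    apply Nat.sInf_le
    refine ⟨Fin.lastCases (w, {x | T.Adj w x}) f', ?_, ?_⟩
    · intro i
      induction i using Fin.lastCases with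
      | last =>
        simp only [Fin.lastCases_last]
        exact ⟨⟨v, hvw.symm⟩, fun hc => T.irrefl hc⟩
      | cast i => simpa using hval' i
    · intro u x
      constructor
      · intro hux
        by_cases hu : u = w
        · exact ⟨Fin.last _, Or.inl ⟨by simp [hu], by simp [hu ▸ hux]⟩⟩
        · by_cases hx : x = w
          · exact ⟨Fin.last _, Or.inr ⟨by simp [hx], by simpa using (hx ▸ hux).symm⟩⟩
          · obtain ⟨i, hi⟩ := (hcov' u x).1 ⟨hux, hu, hx⟩
            exact ⟨i.castSucc, by simpa using hi⟩
      · rintro ⟨i, hi⟩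
        induction i using Fin.lastCases with
        | last =>
          simp only [Fin.lastCases_last] at hi
          rcases hi with ⟨rfl, hx⟩ | ⟨rfl, hu⟩
          · exact hx
          · exact (Set.mem_setOf_eq ▸ hu).symm
        | cast i =>
          simp only [Fin.lastCases_castSucc] at hi
          exact ((hcov' u x).2 ⟨i, hi⟩).1
  · obtain ⟨f, hval, hcov⟩ := starc_mem T
    set s : Finset (Fin (starCoverNumber T)) :=
      Finset.univ.filter (fun j => (f j).1 ≠ w ∧ ((f j).2 \ {w}).Nonempty) with hs
    have hgood : ∀ j ∈ s, (f j).1 ≠ w ∧ ((f j).2 \ {w}).Nonempty := by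
      intro j hj; rw [hs, Finset.mem_filter] at hj; exact hj.2
    have hmem' : s.card ∈ SC (delV T w) := by
      refine ⟨fun i => ((f (s.equivFin.symm i : Fin (starCoverNumber T))).1,
        (f (s.equivFin.symm i : Fin (starCoverNumber T))).2 \ {w}), ?_, ?_⟩
      · intro i
        obtain ⟨h1, h2⟩ := hgood _ (s.equivFin.symm i).2
        exact ⟨h2, fun hc => (hval _).2 hc.1⟩
      · intro u x
        constructor
        · rintro ⟨hux, hu, hx⟩
          obtain ⟨j, hj⟩ := (hcov u x).1 hux
          rcases hj with ⟨h1, h2⟩ | ⟨h1, h2⟩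
          · have hjs : j ∈ s := by
              rw [hs, Finset.mem_filter]
              exact ⟨Finset.mem_univ _, h1 ▸ hu, ⟨x, h2, hx⟩⟩
            refine ⟨s.equivFin ⟨j, hjs⟩, Or.inl ⟨?_, ?_⟩⟩ <;> simp [h1, h2, hx]
          · have hjs : j ∈ s := by
              rw [hs, Finset.mem_filter]
              exact ⟨Finset.mem_univ _, h1 ▸ hx, ⟨u, h2, hu⟩⟩
            refine ⟨s.equivFin ⟨j, hjs⟩, Or.inr ⟨?_, ?_⟩⟩ <;> simp [h1, h2, hu]
        · rintro ⟨i, hi⟩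
          set j := (s.equivFin.symm i : Fin (starCoverNumber T)) with hj
          obtain ⟨hjw, -⟩ := hgood _ (s.equivFin.symm i).2
          rcases hi with ⟨h1, h2, h2'⟩ | ⟨h1, h2, h2'⟩
          · exact ⟨(hcov u x).2 ⟨j, Or.inl ⟨h1, h2⟩⟩, h1 ▸ hjw, by simpa using h2'⟩
          · exact ⟨(hcov u x).2 ⟨j, Or.inr ⟨h1, h2⟩⟩, by simpa using h2', h1 ▸ hjw⟩
    have hlt : s.card < starCoverNumber T := by
      obtain ⟨j₀, hj₀⟩ := (hcov w v).1 hvw.symm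
      have hj₀s : j₀ ∉ s := by
        rw [hs, Finset.mem_filter]
        rintro ⟨-, hn, hne⟩
        rcases hj₀ with ⟨h1, h2⟩ | ⟨h1, h2⟩
        · exact hn h1.symm
        · obtain ⟨x, hx, hxw⟩ := hne
          have hadj : T.Adj (f j₀).1 x := (hcov (f j₀).1 x).2 ⟨j₀, Or.inl ⟨rfl, hx⟩⟩
          rw [← h1] at hadj
          exact hxw (hleaf x hadj)
      calc s.card < Finset.univ.card := Finset.card_lt_card
            (Finset.ssubset_univ_iff.mpr (fun hc => hj₀s (hc ▸ Finset.mem_univ j₀)))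
        _ = starCoverNumber T := by simp
    have := Nat.sInf_le hmem'
    rw [starCoverNumber_eq' (delV T w)]
    omega

omit [DecidableEq V] in
lemma vecMulVec_mulVec' (u r x : V → ℝ) :
    (vecMulVec u r).mulVec x = (r ⬝ᵥ x) • u := by
  funext i
  simp only [Matrix.mulVec, dotProduct, vecMulVec_apply, Pi.smul_apply, smul_eq_mul]
  rw [Finset.sum_mul]
  exact Finset.sum_congr rfl fun j _ => by ring

lemma leaf_decomp (A : Matrix V V ℝ) (w : V) (hAsymm : A.IsSymm) (hAww : A w w = 0) :
    A = (Matrix.of fun u x => if u = w ∨ x = w then 0 else A u x)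
        + vecMulVec (Pi.single w 1) (fun u => A u w)
        + vecMulVec (fun u => A u w) (Pi.single w 1) := by
  ext i j
  simp only [Matrix.add_apply, Matrix.of_apply, vecMulVec_apply]
  by_cases hi : i = w <;> by_cases hj : j = w <;>
    simp [hi, hj, Pi.single_apply, hAww, hAsymm.apply]

lemma rank_step (A : Matrix V V ℝ) (v w : V)
    (hAsymm : A.IsSymm) (hvw : v ≠ w) (hAvw : 0 < A v w) (hAww : A w w = 0)
    (hvrow : ∀ u, u ≠ w → A v u = 0) :
    A.rank = (Matrix.of fun u x => if u = w ∨ x = w then 0 else A u x : Matrix V V ℝ).rank + 2 := by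
  classical
  set A' : Matrix V V ℝ := Matrix.of fun u x => if u = w ∨ x = w then 0 else A u x with hA'
  set r : V → ℝ := fun u => A u w with hr
  set ew : V → ℝ := Pi.single w 1 with hew
  have hrw : r w = 0 := hAww
  have hrv : 0 < r v := by simpa [hr] using hAvw
  have hdecomp : A = A' + vecMulVec ew r + vecMulVec r ew := leaf_decomp A w hAsymm hAww
  set R' : Submodule ℝ (V → ℝ) := LinearMap.range A'.mulVecLin with hR'
  set S : Submodule ℝ (V → ℝ) := span ℝ {ew, r} with hS
  have hcolv : A.mulVec (Pi.single v (A v w)⁻¹) = ew := by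
    funext i
    simp only [Matrix.mulVec_single]
    by_cases hi : i = w
    · rw [hi, Pi.smul_apply, op_smul_eq_mul, Matrix.col_apply, hAsymm.apply v w, mul_inv_cancel₀ hAvw.ne']
      simp [hew, Pi.single_apply]
    · have h0 : A i v = 0 := by rw [hAsymm.apply]; exact hvrow i hi
      simp [h0, hew, Pi.single_apply, hi]
  have hcolw : A.mulVec (Pi.single w 1) = r := by
    funext i; simp only [Matrix.mulVec_single]; simp [hr]
  have hew_mem : ew ∈ LinearMap.range A.mulVecLin := ⟨_, hcolv⟩
  have hr_mem : r ∈ LinearMap.range A.mulVecLin := ⟨_, hcolw⟩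
  have hrange : LinearMap.range A.mulVecLin = R' ⊔ S := by
    apply le_antisymm
    · rintro y ⟨x, rfl⟩
      have : A.mulVecLin x = A'.mulVec x + ((r ⬝ᵥ x) • ew + (ew ⬝ᵥ x) • r) := by
        rw [show A.mulVecLin x = A.mulVec x from rfl, hdecomp]
        rw [Matrix.add_mulVec, Matrix.add_mulVec, vecMulVec_mulVec', vecMulVec_mulVec']
        ring_nf
      rw [this]
      exact add_mem (mem_sup_left ⟨x, rfl⟩) (mem_sup_right (add_mem
        (smul_mem _ _ (subset_span (by simp))) (smul_mem _ _ (subset_span (by simp)))))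
    · apply sup_le
      · rw [hR', Matrix.range_mulVecLin]
        apply span_le.mpr
        rintro y ⟨u, rfl⟩
        by_cases hu : u = w
        · have : A'ᵀ u = 0 := by
            funext i; simp [hA', Matrix.transpose_apply, hu]
          rw [show A'.col u = A'ᵀ u from rfl, this]; exact zero_mem _
        · have hcol : A'ᵀ u = A.mulVec (Pi.single u 1) - (A w u) • ew := by
            funext i
            simp only [Matrix.mulVec_single, Pi.sub_apply, Pi.smul_apply, smul_eq_mul]
            by_cases hi : i = w <;>
              simp [hA', Matrix.transpose_apply, hi, hu, hew, Pi.single_apply]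
          rw [show A'.col u = A'ᵀ u from rfl, hcol]
          exact sub_mem ⟨_, rfl⟩ (smul_mem _ _ hew_mem)
      · rw [hS]
        apply span_le.mpr
        rintro y (rfl | rfl)
        · exact hew_mem
        · exact hr_mem
  have hA'v : ∀ u, A' v u = 0 := by
    intro u
    by_cases hu : u = w <;> simp [hA', hu, hvrow u, hvw]
  have hA'w : ∀ u, A' w u = 0 := by intro u; simp [hA']
  have hRzero : ∀ x ∈ R', x v = 0 ∧ x w = 0 := by
    rintro x ⟨y, rfl⟩
    constructor <;>
    · show (A'.mulVec y) _ = 0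
      simp only [Matrix.mulVec, dotProduct]
      apply Finset.sum_eq_zero
      intro u _
      simp [hA'v, hA'w]
  have hdisj : R' ⊓ S = ⊥ := by
    rw [eq_bot_iff]
    rintro x ⟨hxR, hxS⟩
    obtain ⟨a, b, hab⟩ := Submodule.mem_span_pair.mp hxS
    obtain ⟨hv0, hw0⟩ := hRzero x hxR
    have hxw : x w = a := by
      rw [← hab]; simp [hew, hrw, Pi.single_apply]
    have hxv : x v = b * r v := by
      rw [← hab]; simp [hew, Pi.single_apply, hvw]
    have ha : a = 0 := by rw [← hxw, hw0]
    have hb : b = 0 := by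
      have := hxv.symm.trans hv0
      rcases mul_eq_zero.mp this with h | h
      · exact h
      · exact absurd h hrv.ne'
    rw [Submodule.mem_bot, ← hab, ha, hb]
    simp
  have hindep : LinearIndependent ℝ ![ew, r] := by
    rw [linearIndependent_fin2]
    constructor
    · intro hc
      have := congr_fun hc v
      simp only [Pi.zero_apply] at this
      exact hrv.ne' this
    · intro a hc
      have := congr_fun hc w
      simp [hew, hrw, Pi.single_apply] at this
  have hSrank : Module.finrank ℝ S = 2 := by
    have hspan : S = span ℝ (Set.range ![ew, r]) := by
      rw [hS]; congr 1
      ext y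
      constructor
      · rintro (rfl | rfl)
        · exact ⟨0, rfl⟩
        · exact ⟨1, rfl⟩
      · rintro ⟨i, rfl⟩
        fin_cases i
        · exact Or.inl rfl
        · exact Or.inr rfl
    rw [hspan, finrank_span_eq_card hindep]
    simp
  have hmain := Submodule.finrank_sup_add_finrank_inf_eq R' S
  rw [hdisj] at hmain
  simp only [finrank_bot, add_zero] at hmain
  have hArank : A.rank = Module.finrank ℝ (R' ⊔ S : Submodule ℝ (V → ℝ)) := by
    have : A.rank = Module.finrank ℝ (LinearMap.range A.mulVecLin) := rfl
    rw [this, hrange]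
  have hA'rank : A'.rank = Module.finrank ℝ R' := rfl
  rw [hArank, hmain, hSrank, hA'rank]

omit [Fintype V] [DecidableEq V] in
lemma stM_step {A A' : Matrix V V ℝ} (ew r : V → ℝ)
    (hew : ∀ u, 0 ≤ ew u) (hrn : ∀ u, 0 ≤ r u)
    (hdecomp : A = A' + vecMulVec ew r + vecMulVec r ew)
    (k : ℕ) (B' : Matrix V (Fin k) ℝ) (C' : Matrix (Fin k) (Fin k) ℝ)
    (hB' : EntrywiseNonneg B') (hC's : C'.IsSymm) (hC'n : EntrywiseNonneg C')
    (hfact : A' = B' * C' * B'ᵀ) :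
    ∃ B : Matrix V (Fin (k + 2)) ℝ, ∃ C : Matrix (Fin (k + 2)) (Fin (k + 2)) ℝ,
      EntrywiseNonneg B ∧ C.IsSymm ∧ EntrywiseNonneg C ∧ A = B * C * Bᵀ := by
  classical
  set D : Matrix (Fin 2) (Fin 2) ℝ := !![0,1;1,0] with hD
  set B₀ : Matrix V (Fin k ⊕ Fin 2) ℝ :=
    Matrix.of (fun u => Sum.elim (fun j => B' u j) (fun j => ![ew u, r u] j)) with hB₀
  set C₀ : Matrix (Fin k ⊕ Fin 2) (Fin k ⊕ Fin 2) ℝ := fromBlocks C' 0 0 D with hC₀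
  set e : Fin (k + 2) ≃ (Fin k ⊕ Fin 2) := finSumFinEquiv.symm with he
  refine ⟨B₀.submatrix id e, C₀.submatrix e e, ?_, ?_, ?_, ?_⟩
  · intro u j
    rcases hj : e j with j' | j'
    · simpa [hB₀, Matrix.submatrix_apply, hj] using hB' u j'
    · simp only [hB₀, Matrix.submatrix_apply, hj, Matrix.of_apply, Sum.elim_inr]
      fin_cases j' <;> simp [hew u, hrn u]
  · apply Matrix.IsSymm.submatrix
    apply Matrix.IsSymm.ext
    rintro (i | i) (j | j) <;>
        simp only [hC₀, fromBlocks_apply₁₁, fromBlocks_apply₁₂, fromBlocks_apply₂₁,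
          fromBlocks_apply₂₂, Matrix.zero_apply]
    · exact hC's.apply i j
    · fin_cases i <;> fin_cases j <;> norm_num [hD]
  · intro i j
    rcases hi : e i with i' | i' <;> rcases hj : e j with j' | j' <;>
      simp only [hC₀, Matrix.submatrix_apply, hi, hj, fromBlocks_apply₁₁,
        fromBlocks_apply₁₂, fromBlocks_apply₂₁, fromBlocks_apply₂₂, Matrix.zero_apply]
    · exact hC'n i' j'
    · exact le_refl 0
    · exact le_refl 0
    · fin_cases i' <;> fin_cases j' <;> norm_num [hD]
  · have h1 : (B₀.submatrix id e) * (C₀.submatrix e e) = (B₀ * C₀).submatrix id e := by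
      rw [Matrix.submatrix_mul_equiv]
    have h2 : (B₀.submatrix id e)ᵀ = B₀ᵀ.submatrix e id := by
      rw [Matrix.transpose_submatrix]
    rw [h1, h2, Matrix.submatrix_mul_equiv, Matrix.submatrix_id_id]
    rw [hdecomp, hfact]
    ext u x
    simp only [Matrix.add_apply, Matrix.mul_apply, Fintype.sum_sum_type, Fin.sum_univ_two,
      hB₀, hC₀, Matrix.of_apply, Sum.elim_inl, Sum.elim_inr, fromBlocks_apply₁₁,
      fromBlocks_apply₁₂, fromBlocks_apply₂₁, fromBlocks_apply₂₂, Matrix.zero_apply,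
      Matrix.transpose_apply, vecMulVec_apply, hD, Matrix.cons_val_zero, Matrix.cons_val_one,
      Matrix.head_cons, Matrix.cons_val', Matrix.empty_val', Matrix.cons_val_fin_one]
    simp only [Matrix.vecHead, mul_zero, Finset.sum_const_zero, mul_one, add_zero, zero_mul]
    ring

/-- The set of achievable trifactorization widths. -/
def stMSet (A : Matrix V V ℝ) : Set ℕ :=
  {k : ℕ | ∃ B : Matrix V (Fin k) ℝ, ∃ C : Matrix (Fin k) (Fin k) ℝ,
    EntrywiseNonneg B ∧ C.IsSymm ∧ EntrywiseNonneg C ∧ A = B * C * Bᵀ}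

lemma stM_eq' (A : Matrix V V ℝ) : stM A = sInf (stMSet A) := rfl

lemma rank_le_stM (A : Matrix V V ℝ) (h : (stMSet A).Nonempty) : A.rank ≤ stM A := by
  obtain ⟨B, C, -, -, -, hfact⟩ := Nat.sInf_mem h
  rw [stM_eq']
  conv_lhs => rw [hfact]
  refine le_trans (Matrix.rank_mul_le_left _ _) ?_
  refine le_trans (Matrix.rank_mul_le_left _ _) ?_
  exact le_trans B.rank_le_card_width (by simp)

lemma main_induction (n : ℕ) :
    ∀ (T : SimpleGraph V), T.edgeSet.ncard = n → T.IsAcyclic →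
    ∀ A : Matrix V V ℝ, A.IsSymm → EntrywiseNonneg A → (∀ i j, T.Adj i j ↔ 0 < A i j) →
    A.rank = 2 * starCoverNumber T ∧ (2 * starCoverNumber T) ∈ stMSet A := by
  induction n using Nat.strong_induction_on with
  | _ n IH =>
  intro T hn hT A hAsymm hAnn hpat
  have hzero : ∀ i j, ¬ T.Adj i j → A i j = 0 := fun i j h =>
    le_antisymm (not_lt.mp (fun hc => h ((hpat i j).mpr hc))) (hAnn i j)
  by_cases hE : ∃ x y, T.Adj x y
  · obtain ⟨v, w, hvw, hleaf⟩ := exists_leaf' T hT hE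
    set T' := delV T w with hT'def
    set A' : Matrix V V ℝ := Matrix.of fun u x => if u = w ∨ x = w then 0 else A u x with hA'
    have hvwne : v ≠ w := hvw.ne
    have hAvw : 0 < A v w := (hpat v w).mp hvw
    have hAww : A w w = 0 := hzero w w (T.irrefl)
    have hvrow : ∀ u, u ≠ w → A v u = 0 := fun u hu => hzero v u (fun hc => hu (hleaf u hc))
    have hle : T' ≤ T := fun u x h => h.1
    have hT'ac : T'.IsAcyclic := fun u p hp =>
      hT (p.mapLe hle) ((SimpleGraph.Walk.mapLe_isCycle hle).mpr hp)
    have hcard : T'.edgeSet.ncard < n := by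
      rw [← hn]
      apply Set.ncard_lt_ncard _ T.edgeSet.toFinite
      constructor
      · exact SimpleGraph.edgeSet_mono hle
      · intro hsub
        have hmem : s(v, w) ∈ T'.edgeSet := hsub (T.mem_edgeSet.mpr hvw)
        rw [SimpleGraph.mem_edgeSet] at hmem
        exact hmem.2.2 rfl
    have hA'symm : A'.IsSymm := by
      apply Matrix.IsSymm.ext
      intro i j
      by_cases h : i = w ∨ j = w
      · have h' : j = w ∨ i = w := h.symm
        simp [hA', h, h']
      · have h' : ¬(j = w ∨ i = w) := fun hc => h hc.symm
        simp [hA', h, h', hAsymm.apply i j]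
    have hA'nn : EntrywiseNonneg A' := by
      intro i j
      simp only [hA', Matrix.of_apply]
      split
      · exact le_rfl
      · exact hAnn i j
    have hA'pat : ∀ i j, T'.Adj i j ↔ 0 < A' i j := by
      intro i j
      simp only [hA', Matrix.of_apply]
      constructor
      · rintro ⟨hadj, hi, hj⟩
        rw [if_neg (by tauto)]
        exact (hpat i j).mp hadj
      · intro h
        by_cases hc : i = w ∨ j = w
        · rw [if_pos hc] at h
          exact absurd h (lt_irrefl 0)
        · rw [if_neg hc] at h
          exact ⟨(hpat i j).mpr h, fun h' => hc (Or.inl h'), fun h' => hc (Or.inr h')⟩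
    obtain ⟨hrank', hmem'⟩ := IH _ hcard T' rfl hT'ac A' hA'symm hA'nn hA'pat
    have hstarc : starCoverNumber T = starCoverNumber T' + 1 := starc_step T v w hvw hleaf
    have hrank : A.rank = A'.rank + 2 := rank_step A v w hAsymm hvwne hAvw hAww hvrow
    constructor
    · omega
    · obtain ⟨B', C', hB', hC's, hC'n, hfact⟩ := hmem'
      have hewnn : ∀ u, (0:ℝ) ≤ (Pi.single w (1:ℝ) : V → ℝ) u := by
        intro u
        by_cases hu : u = w <;> simp [hu, Pi.single_apply]
      obtain ⟨B, C, hB, hCs, hCn, hfact'⟩ :=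
        stM_step (A := A) (A' := A') (Pi.single w (1:ℝ)) (fun u => A u w) hewnn
          (fun u => hAnn u w) (leaf_decomp A w hAsymm hAww) _ B' C' hB' hC's hC'n hfact
      have hk : 2 * starCoverNumber T = 2 * starCoverNumber T' + 2 := by omega
      rw [hk]
      exact ⟨B, C, hB, hCs, hCn, hfact'⟩
  · have hA0 : A = 0 := by
      ext i j
      exact hzero i j (fun h => hE ⟨i, j, h⟩)
    have hstarc0 : starCoverNumber T = 0 := by
      have h0 : 0 ∈ SC T := by
        refine ⟨Fin.elim0, fun i => i.elim0, fun u x => ⟨fun h => (hE ⟨u, x, h⟩).elim, ?_⟩⟩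
        rintro ⟨i, -⟩
        exact i.elim0
      have := Nat.sInf_le h0
      rw [starCoverNumber_eq']
      omega
    constructor
    · rw [hA0, Matrix.rank_zero, hstarc0]
    · rw [hstarc0, Nat.mul_zero]
      refine ⟨0, 0, fun i j => le_rfl, ?_, fun i j => le_rfl, ?_⟩
      · show (0 : Matrix (Fin 0) (Fin 0) ℝ)ᵀ = 0
        simp
      · rw [hA0]
        ext i j
        simp [Matrix.mul_apply]

end Statement10Aux

/-- Let `T` be a forest (loopless acyclic simple graph) and `A` any
symmetric entrywise-nonnegative matrix whose pattern graph is `T`. Then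
`rank(A) = st₊(A) = 2 ⬝ starc(T)`; in particular `st₊(T) = 2 ⬝ starc(T)`, where
`starc` is the edge star cover number. -/
theorem rank_eq_st_eq_two_mul_starc {V : Type*} [Fintype V] [DecidableEq V]
    (T : SimpleGraph V) (hT : T.IsAcyclic)
    (A : Matrix V V ℝ) (hAsymm : A.IsSymm) (hAnn : EntrywiseNonneg A)
    (hpattern : ∀ i j : V, T.Adj i j ↔ 0 < A i j) :
    A.rank = stM A ∧ stM A = 2 * starCoverNumber T ∧
      stMGraph T.toLGraph = 2 * starCoverNumber T := by
  have key : ∀ A₂ : Matrix V V ℝ, A₂.IsSymm → EntrywiseNonneg A₂ →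
      (∀ i j, T.Adj i j ↔ 0 < A₂ i j) →
      A₂.rank = 2 * starCoverNumber T ∧ stM A₂ = 2 * starCoverNumber T := by
    intro A₂ h1 h2 h3
    obtain ⟨hrank, hmem⟩ := main_induction (T.edgeSet.ncard) T rfl hT A₂ h1 h2 h3
    have hne : (stMSet A₂).Nonempty := ⟨_, hmem⟩
    have hle : stM A₂ ≤ 2 * starCoverNumber T := Nat.sInf_le hmem
    have hge : 2 * starCoverNumber T ≤ stM A₂ := hrank ▸ rank_le_stM A₂ hne
    exact ⟨hrank, le_antisymm hle hge⟩
  obtain ⟨hrank, hstM⟩ := key A hAsymm hAnn hpattern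
  refine ⟨by rw [hrank, hstM], hstM, ?_⟩
  have hset : {k : ℕ | ∃ A' : Matrix V V ℝ, A'.IsSymm ∧ EntrywiseNonneg A' ∧
      (∀ i j, T.toLGraph.Adj i j ↔ 0 < A' i j) ∧ stM A' = k}
      = {2 * starCoverNumber T} := by
    ext k
    simp only [Set.mem_setOf_eq, Set.mem_singleton_iff]
    constructor
    · rintro ⟨A', h1, h2, h3, rfl⟩
      exact (key A' h1 h2 h3).2
    · rintro rfl
      exact ⟨A, hAsymm, hAnn, hpattern, hstM⟩
  show sInf _ = _
  rw [hset]
  exact csInf_singleton _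
end LGraph
end
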